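/- arXiv:chao-dyn/9703010 — 9 statements merged into one kernel-verified Lean document; each statement's English description precedes it below -/
import Mathlib

section
/- The parameter-dependent semiflow possesses τ₁-slow relaxations if and only if there exist points x* ∈ X and k* ∈ K, sequences xᵢ → x* in X and kᵢ → k* in K, and a number δ > 0 such that for every i, every y ∈ ω(x*, k*) and every z ∈ ω(xᵢ, kᵢ) satisfy dist(y, z) > δ. -/
open Filter Topology Metric Set MeasureTheory
open scoped ENNReal

/-- A parameter-dependent semiflow on a metric space `X` with parameter space `K`:
a map `f : [0,∞) × X × K → X` (encoded with time in `ℝ`, with conditions only for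
nonnegative times), continuous on `[0,∞) × X × K`, satisfying the semigroup
identities, and injective in `x` for each fixed time and parameter. -/
structure PSemiflow (X K : Type*) [MetricSpace X] [MetricSpace K] where
  f : ℝ → X → K → X
  cont : ContinuousOn (fun p : ℝ × X × K => f p.1 p.2.1 p.2.2) {p : ℝ × X × K | 0 ≤ p.1}
  map_zero : ∀ x k, f 0 x k = x
  semigroup : ∀ t t' : ℝ, 0 ≤ t → 0 ≤ t' → ∀ x k, f t (f t' x k) k = f (t + t') x k
  inj : ∀ t : ℝ, 0 ≤ t → ∀ k, Function.Injective fun x => f t x k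

namespace PSemiflow

variable {X K : Type*} [MetricSpace X] [MetricSpace K] (S : PSemiflow X K)

/-- The ω-limit set `ω(x,k)`: all limits of `f(tₙ,x,k)` along sequences `tₙ → ∞`. -/
def omega (x : X) (k : K) : Set X :=
  {y | ∃ t : ℕ → ℝ, (∀ n, 0 ≤ t n) ∧ Tendsto t atTop atTop ∧
      Tendsto (fun n => S.f (t n) x k) atTop (𝓝 y)}

/-- The complete ω-limit set `ω(k) = ⋃ₓ ω(x,k)`. -/
def omegaK (k : K) : Set X := ⋃ x : X, S.omega x k

/-- The relaxation time `τ₁(x,k,ε)`: time of the first entry of the motion into the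
`ε`-neighbourhood of `ω(x,k)`. -/
noncomputable def tau1 (x : X) (k : K) (ε : ℝ) : ℝ :=
  sInf {t : ℝ | 0 ≤ t ∧ infDist (S.f t x k) (S.omega x k) < ε}

/-- The system possesses τ₁-slow relaxations. -/
def SlowTau1 : Prop := ∃ ε > (0:ℝ), ∀ T > (0:ℝ), ∃ x k, S.tau1 x k ε > T

end PSemiflow

namespace PSemiflow

variable {X K : Type*} [MetricSpace X] [MetricSpace K] (S : PSemiflow X K)

lemma tendsto_f_aux {x : X} {k : K} {t : ℝ} (ht : 0 ≤ t) {xs : ℕ → X} {ks : ℕ → K}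
    (hx : Tendsto xs atTop (𝓝 x)) (hk : Tendsto ks atTop (𝓝 k)) :
    Tendsto (fun n => S.f t (xs n) (ks n)) atTop (𝓝 (S.f t x k)) := by
  have hcw : ContinuousWithinAt (fun p : ℝ × X × K => S.f p.1 p.2.1 p.2.2)
      {p : ℝ × X × K | 0 ≤ p.1} (t, x, k) := S.cont _ ht
  have h1 : Tendsto (fun n => ((t, xs n, ks n) : ℝ × X × K)) atTop
      (𝓝[{p : ℝ × X × K | 0 ≤ p.1}] (t, x, k)) := by
    refine tendsto_nhdsWithin_of_tendsto_nhds_of_eventually_within _ ?_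
      (Eventually.of_forall fun n => ht)
    rw [nhds_prod_eq, nhds_prod_eq]
    exact tendsto_const_nhds.prodMk (hx.prodMk hk)
  exact hcw.tendsto.comp h1

lemma omega_nonempty' [CompactSpace X] (x : X) (k : K) : (S.omega x k).Nonempty := by
  obtain ⟨a, -, φ, hφ, ha⟩ := IsCompact.tendsto_subseq
    (x := fun n : ℕ => S.f n x k) isCompact_univ (fun n => mem_univ _)
  exact ⟨a, fun n => (φ n : ℝ), fun n => Nat.cast_nonneg _,
    (tendsto_natCast_atTop_atTop (R := ℝ)).comp hφ.tendsto_atTop, ha⟩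

lemma isClosed_omega' (x : X) (k : K) : IsClosed (S.omega x k) := by
  apply IsSeqClosed.isClosed
  intro u y hu huy
  have hsel : ∀ j : ℕ, ∃ s : ℝ, (j:ℝ) ≤ s ∧ 0 ≤ s ∧ dist (S.f s x k) (u j) < 1/(j+1) := by
    intro j
    obtain ⟨t, ht0, htop, hconv⟩ := hu j
    have h1 : ∀ᶠ n in atTop, (j:ℝ) ≤ t n := htop.eventually (eventually_ge_atTop _)
    have h2 : ∀ᶠ n in atTop, dist (S.f (t n) x k) (u j) < 1/(j+1) := by
      have := hconv (ball_mem_nhds (u j) (show (0:ℝ) < 1/(j+1) by positivity))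
      filter_upwards [this] with n hn
      exact mem_ball.1 hn
    obtain ⟨n, hn1, hn2⟩ := (h1.and h2).exists
    exact ⟨t n, hn1, ht0 n, hn2⟩
  choose s hs1 hs2 hs3 using hsel
  refine ⟨s, hs2, tendsto_atTop_mono hs1 tendsto_natCast_atTop_atTop, ?_⟩
  rw [tendsto_iff_dist_tendsto_zero]
  apply squeeze_zero (fun j => dist_nonneg)
    (g := fun j => 1/(j+1) + dist (u j) y)
    (fun j => le_trans (dist_triangle _ (u j) y) (by linarith [hs3 j]))
  have h0 : Tendsto (fun j : ℕ => 1/((j:ℝ)+1)) atTop (𝓝 0) :=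
    tendsto_one_div_add_atTop_nhds_zero_nat
  have h1 : Tendsto (fun j => dist (u j) y) atTop (𝓝 0) :=
    tendsto_iff_dist_tendsto_zero.1 huy
  simpa using h0.add h1

lemma omega_shift' (x : X) (k : K) {s : ℝ} (hs : 0 ≤ s) :
    S.omega (S.f s x k) k = S.omega x k := by
  ext y
  constructor
  · rintro ⟨t, ht0, htop, hconv⟩
    refine ⟨fun n => t n + s, fun n => add_nonneg (ht0 n) hs,
      tendsto_atTop_add_const_right _ s htop, ?_⟩
    exact hconv.congr fun n => S.semigroup (t n) s (ht0 n) hs x k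
  · rintro ⟨t, ht0, htop, hconv⟩
    refine ⟨fun n => max (t n - s) 0, fun n => le_max_right _ _, ?_, ?_⟩
    · exact tendsto_atTop_mono (fun n => le_max_left _ _)
        (tendsto_atTop_add_const_right _ (-s) htop)
    · have hev : ∀ᶠ n in atTop, S.f (t n) x k = S.f (max (t n - s) 0) (S.f s x k) k := by
        filter_upwards [htop.eventually (eventually_ge_atTop s)] with n hn
        have h1 : max (t n - s) 0 = t n - s := max_eq_left (by linarith)
        rw [h1, S.semigroup (t n - s) s (by linarith) hs x k, sub_add_cancel]
      exact hconv.congr' hev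

lemma exists_forall_infDist_lt [CompactSpace X] (x : X) (k : K) {ε : ℝ} (hε : 0 < ε) :
    ∃ T : ℝ, 0 ≤ T ∧ ∀ t ≥ T, infDist (S.f t x k) (S.omega x k) < ε := by
  by_contra h
  push_neg at h
  have hsel : ∀ n : ℕ, ∃ t ≥ (n:ℝ), ε ≤ infDist (S.f t x k) (S.omega x k) := by
    intro n
    obtain ⟨t, ht, hinf⟩ := h n (Nat.cast_nonneg n)
    exact ⟨t, ht, hinf⟩
  choose t ht hinf using hsel
  obtain ⟨y, -, φ, hφ, hconv⟩ := IsCompact.tendsto_subseq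
    (x := fun n => S.f (t n) x k) isCompact_univ (fun n => mem_univ _)
  have hy : y ∈ S.omega x k := by
    refine ⟨fun n => t (φ n), fun n => le_trans (Nat.cast_nonneg _) (ht (φ n)), ?_, hconv⟩
    exact tendsto_atTop_mono
      (fun n => le_trans (Nat.cast_le.2 hφ.le_apply) (ht (φ n))) tendsto_natCast_atTop_atTop
  have hlim : Tendsto (fun n => infDist (S.f (t (φ n)) x k) (S.omega x k)) atTop
      (𝓝 (infDist y (S.omega x k))) :=
    ((continuous_infDist_pt (S.omega x k)).tendsto y).comp hconv
  have : ε ≤ infDist y (S.omega x k) :=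
    ge_of_tendsto hlim (Eventually.of_forall fun n => hinf (φ n))
  rw [infDist_zero_of_mem hy] at this
  linarith

lemma shadow [CompactSpace X] [CompactSpace K] {x : X} {k : K} {xs : ℕ → X} {ks : ℕ → K}
    (hx : Tendsto xs atTop (𝓝 x)) (hk : Tendsto ks atTop (𝓝 k)) {η : ℝ} (R : ℝ) (hη : 0 < η) :
    ∀ᶠ i in atTop, ∀ t ∈ Icc (0:ℝ) R, dist (S.f t (xs i) (ks i)) (S.f t x k) < η := by
  have hcpt : IsCompact ((Icc (0:ℝ) R) ×ˢ ((univ : Set X) ×ˢ (univ : Set K))) :=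
    isCompact_Icc.prod (isCompact_univ.prod isCompact_univ)
  have hsub : (Icc (0:ℝ) R) ×ˢ ((univ : Set X) ×ˢ (univ : Set K)) ⊆ {p : ℝ × X × K | 0 ≤ p.1} :=
    fun p hp => hp.1.1
  have huc := hcpt.uniformContinuousOn_of_continuous (S.cont.mono hsub)
  rw [Metric.uniformContinuousOn_iff] at huc
  obtain ⟨d, hd, hduc⟩ := huc η hη
  have h1 : ∀ᶠ i in atTop, dist (xs i) x < d := by
    filter_upwards [hx (ball_mem_nhds x hd)] with i hi; exact mem_ball.1 hi
  have h2 : ∀ᶠ i in atTop, dist (ks i) k < d := by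
    filter_upwards [hk (ball_mem_nhds k hd)] with i hi; exact mem_ball.1 hi
  filter_upwards [h1, h2] with i hi1 hi2
  intro t ht
  have hmem1 : ((t, xs i, ks i) : ℝ × X × K) ∈ (Icc (0:ℝ) R) ×ˢ ((univ : Set X) ×ˢ (univ : Set K)) :=
    ⟨ht, mem_univ _, mem_univ _⟩
  have hmem2 : ((t, x, k) : ℝ × X × K) ∈ (Icc (0:ℝ) R) ×ˢ ((univ : Set X) ×ˢ (univ : Set K)) :=
    ⟨ht, mem_univ _, mem_univ _⟩
  have hdlt : dist ((t, xs i, ks i) : ℝ × X × K) (t, x, k) < d := by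
    simp only [Prod.dist_eq, dist_self]
    exact max_lt hd (max_lt hi1 hi2)
  exact hduc _ hmem1 _ hmem2 hdlt

end PSemiflow



/-- Theorem 2.1′: the system possesses τ₁-slow relaxations iff the ω-limit set has a
jump discontinuity: there are `x* ∈ X`, `k* ∈ K`, sequences `xᵢ → x*`, `kᵢ → k*` and
`δ > 0` such that for every `i`, every `y ∈ ω(x*,k*)` and `z ∈ ω(xᵢ,kᵢ)` satisfy
`dist y z > δ`. -/
theorem slowTau1_iff_omega_jump {X K : Type*} [MetricSpace X] [CompactSpace X]
    [MetricSpace K] [CompactSpace K] (S : PSemiflow X K) :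
    S.SlowTau1 ↔
      ∃ (xstar : X) (kstar : K) (xs : ℕ → X) (ks : ℕ → K) (δ : ℝ), 0 < δ ∧
        Tendsto xs atTop (𝓝 xstar) ∧ Tendsto ks atTop (𝓝 kstar) ∧
        ∀ i, ∀ y ∈ S.omega xstar kstar, ∀ z ∈ S.omega (xs i) (ks i), dist y z > δ := by
  constructor
  · rintro ⟨ε, hε, hT⟩
    have hsel : ∀ n : ℕ, ∃ x k, S.tau1 x k ε > 2*(n:ℝ) + 2 := fun n => hT _ (by positivity)
    choose xseq kseq hτ using hsel
    have hfar : ∀ n : ℕ, ∀ t : ℝ, 0 ≤ t → t ≤ 2*(n:ℝ) + 2 →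
        ε ≤ infDist (S.f t (xseq n) (kseq n)) (S.omega (xseq n) (kseq n)) := by
      intro n t ht0 htle
      by_contra hlt
      push_neg at hlt
      have : S.tau1 (xseq n) (kseq n) ε ≤ t :=
        csInf_le ⟨0, fun u hu => hu.1⟩ ⟨ht0, hlt⟩
      linarith [hτ n]
    set z : ℕ → X := fun n => S.f ((n:ℝ)+1) (xseq n) (kseq n) with hz
    have hzfar : ∀ n : ℕ, ∀ t : ℝ, 0 ≤ t → t ≤ (n:ℝ) + 1 →
        ε ≤ infDist (S.f t (z n) (kseq n)) (S.omega (xseq n) (kseq n)) := by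
      intro n t ht0 htle
      have heq : S.f t (z n) (kseq n) = S.f (t + ((n:ℝ)+1)) (xseq n) (kseq n) :=
        S.semigroup t ((n:ℝ)+1) ht0 (by positivity) _ _
      rw [heq]
      exact hfar n _ (by positivity) (by linarith)
    have hBeq : ∀ n : ℕ, S.omega (z n) (kseq n) = S.omega (xseq n) (kseq n) :=
      fun n => S.omega_shift' _ _ (by positivity)
    obtain ⟨p, -, φ, hφ, hp⟩ := IsCompact.tendsto_subseq
      (x := fun n => ((z n, kseq n) : X × K)) isCompact_univ (fun n => mem_univ _)
    obtain ⟨xst, kst⟩ := p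
    have hzt : Tendsto (fun n => z (φ n)) atTop (𝓝 xst) :=
      (continuous_fst.tendsto (xst, kst)).comp hp
    have hkt : Tendsto (fun n => kseq (φ n)) atTop (𝓝 kst) :=
      (continuous_snd.tendsto (xst, kst)).comp hp
    have hA : IsClosed (S.omega xst kst) := S.isClosed_omega' _ _
    have hclaim : ∃ δ > (0:ℝ), ∃ᶠ n in atTop,
        ∀ y ∈ S.omega xst kst, ∀ w ∈ S.omega (z (φ n)) (kseq (φ n)), dist y w > δ := by
      by_contra hclaim
      push_neg at hclaim
      have hsel2 : ∀ j : ℕ, ∃ n : ℕ, j ≤ n ∧ ∃ y ∈ S.omega xst kst,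
          ∃ w ∈ S.omega (z (φ n)) (kseq (φ n)), dist y w ≤ 1/((j:ℝ)+1) := by
        intro j
        obtain ⟨n, hn1, hn2⟩ :=
          ((eventually_ge_atTop j).and (hclaim (1/((j:ℝ)+1)) (by positivity))).exists
        exact ⟨n, hn1, hn2⟩
      choose nseq hnj yseq hyA wseq hwB hdyw using hsel2
      obtain ⟨ylim, -, ψ, hψ, hyconv⟩ := IsCompact.tendsto_subseq
        (x := yseq) isCompact_univ (fun j => mem_univ _)
      have hylim : ylim ∈ S.omega xst kst :=
        hA.mem_of_tendsto hyconv (Eventually.of_forall fun j => hyA (ψ j))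
      have hwconv : Tendsto (fun j => wseq (ψ j)) atTop (𝓝 ylim) := by
        rw [tendsto_iff_dist_tendsto_zero]
        have hb : ∀ j : ℕ, dist (wseq (ψ j)) ylim ≤ 1/((j:ℝ)+1) + dist (yseq (ψ j)) ylim := by
          intro j
          have h1 : dist (wseq (ψ j)) (yseq (ψ j)) ≤ 1/((ψ j : ℝ)+1) := by
            rw [dist_comm]; exact hdyw (ψ j)
          have h2 : (1:ℝ)/((ψ j:ℝ)+1) ≤ 1/((j:ℝ)+1) := by
            apply one_div_le_one_div_of_le (by positivity)
            have hle : (j:ℝ) ≤ (ψ j : ℝ) := Nat.cast_le.2 hψ.le_apply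
            linarith
          linarith [dist_triangle (wseq (ψ j)) (yseq (ψ j)) ylim]
        refine squeeze_zero (fun j => dist_nonneg) hb ?_
        have h0 : Tendsto (fun j : ℕ => 1/((j:ℝ)+1)) atTop (𝓝 0) :=
          tendsto_one_div_add_atTop_nhds_zero_nat
        have h1 : Tendsto (fun j => dist (yseq (ψ j)) ylim) atTop (𝓝 0) :=
          tendsto_iff_dist_tendsto_zero.1 hyconv
        simpa using h0.add h1
      obtain ⟨tseq, ht0, htop, htconv⟩ := hylim
      have hJtop : Tendsto (fun j => φ (nseq (ψ j))) atTop atTop := by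
        apply tendsto_atTop_mono (f := fun j : ℕ => j) _ tendsto_id
        intro j
        exact le_trans (le_trans hψ.le_apply (hnj (ψ j))) hφ.le_apply
      have key : ∀ m : ℕ, ε ≤ dist (S.f (tseq m) xst kst) ylim := by
        intro m
        have hztJ : Tendsto (fun j => z (φ (nseq (ψ j)))) atTop (𝓝 xst) := by
          refine hzt.comp (tendsto_atTop_mono (f := fun j : ℕ => j) ?_ tendsto_id)
          exact fun j => le_trans hψ.le_apply (hnj (ψ j))
        have hktJ : Tendsto (fun j => kseq (φ (nseq (ψ j)))) atTop (𝓝 kst) := by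
          refine hkt.comp (tendsto_atTop_mono (f := fun j : ℕ => j) ?_ tendsto_id)
          exact fun j => le_trans hψ.le_apply (hnj (ψ j))
        have hF : Tendsto
            (fun j => S.f (tseq m) (z (φ (nseq (ψ j)))) (kseq (φ (nseq (ψ j))))) atTop
            (𝓝 (S.f (tseq m) xst kst)) := S.tendsto_f_aux (ht0 m) hztJ hktJ
        have hdist : Tendsto
            (fun j => dist (S.f (tseq m) (z (φ (nseq (ψ j)))) (kseq (φ (nseq (ψ j)))))
              (wseq (ψ j))) atTop (𝓝 (dist (S.f (tseq m) xst kst) ylim)) :=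
          hF.dist hwconv
        refine ge_of_tendsto hdist ?_
        have hev : ∀ᶠ j in atTop, tseq m ≤ (φ (nseq (ψ j)) : ℝ) :=
          (tendsto_natCast_atTop_atTop (R := ℝ)).comp hJtop |>.eventually
            (eventually_ge_atTop (tseq m))
        filter_upwards [hev] with j hj
        have h1 : ε ≤ infDist (S.f (tseq m) (z (φ (nseq (ψ j)))) (kseq (φ (nseq (ψ j)))))
            (S.omega (xseq (φ (nseq (ψ j)))) (kseq (φ (nseq (ψ j))))) :=
          hzfar _ _ (ht0 m) (by linarith)
        have h2 : wseq (ψ j) ∈ S.omega (xseq (φ (nseq (ψ j)))) (kseq (φ (nseq (ψ j)))) :=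
          (hBeq _) ▸ hwB (ψ j)
        exact le_trans h1 (infDist_le_dist_of_mem h2)
      have hfin : Tendsto (fun m => dist (S.f (tseq m) xst kst) ylim) atTop
          (𝓝 (dist ylim ylim)) := htconv.dist tendsto_const_nhds
      have : ε ≤ dist ylim ylim := ge_of_tendsto hfin (Eventually.of_forall key)
      rw [dist_self] at this
      linarith
    obtain ⟨δ, hδ, hfreq⟩ := hclaim
    obtain ⟨ψ, hψ, hψsep⟩ := extraction_of_frequently_atTop hfreq
    exact ⟨xst, kst, fun i => z (φ (ψ i)), fun i => kseq (φ (ψ i)), δ, hδ,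
      hzt.comp hψ.tendsto_atTop, hkt.comp hψ.tendsto_atTop, hψsep⟩
  · rintro ⟨xst, kst, xs, ks, δ, hδ, hxs, hks, hsep⟩
    refine ⟨δ/2, by linarith, ?_⟩
    intro T hT
    have hA : (S.omega xst kst).Nonempty := S.omega_nonempty' _ _
    obtain ⟨Sσ, hS0, hSsmall⟩ := S.exists_forall_infDist_lt xst kst (show (0:ℝ) < δ/4 by linarith)
    obtain ⟨i, hi⟩ := (S.shadow hxs hks (Sσ + T + 1) (show (0:ℝ) < δ/4 by linarith)).exists
    set x0 := S.f Sσ (xs i) (ks i) with hx0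
    have hBne : (S.omega (xs i) (ks i)).Nonempty := S.omega_nonempty' _ _
    have hBeq : S.omega x0 (ks i) = S.omega (xs i) (ks i) := S.omega_shift' _ _ hS0
    have hfar : ∀ t : ℝ, 0 ≤ t → t ≤ T + 1 →
        δ/2 ≤ infDist (S.f t x0 (ks i)) (S.omega (xs i) (ks i)) := by
      intro t ht0 htle
      have heq : S.f t x0 (ks i) = S.f (t + Sσ) (xs i) (ks i) := S.semigroup t Sσ ht0 hS0 _ _
      have h1 : dist (S.f (t+Sσ) (xs i) (ks i)) (S.f (t+Sσ) xst kst) < δ/4 :=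
        hi (t+Sσ) ⟨by linarith, by linarith⟩
      have h2 : infDist (S.f (t+Sσ) xst kst) (S.omega xst kst) < δ/4 :=
        hSsmall _ (by linarith)
      obtain ⟨y, hyA, hy⟩ := (infDist_lt_iff hA).1 h2
      by_contra hcon
      push_neg at hcon
      obtain ⟨w, hwB, hw⟩ := (infDist_lt_iff hBne).1 hcon
      have hsep' := hsep i y hyA w hwB
      have htri : dist y w ≤ dist y (S.f (t+Sσ) xst kst) +
          dist (S.f (t+Sσ) xst kst) (S.f (t+Sσ) (xs i) (ks i)) +
          dist (S.f (t+Sσ) (xs i) (ks i)) w := dist_triangle4 _ _ _ _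
      rw [heq] at hw
      have e1 : dist y (S.f (t+Sσ) xst kst) = dist (S.f (t+Sσ) xst kst) y := dist_comm _ _
      have e2 : dist (S.f (t+Sσ) xst kst) (S.f (t+Sσ) (xs i) (ks i)) =
          dist (S.f (t+Sσ) (xs i) (ks i)) (S.f (t+Sσ) xst kst) := dist_comm _ _
      linarith
    obtain ⟨S2, hS20, hS2⟩ := S.exists_forall_infDist_lt x0 (ks i) (show (0:ℝ) < δ/2 by linarith)
    have hne2 : {t : ℝ | 0 ≤ t ∧ infDist (S.f t x0 (ks i)) (S.omega x0 (ks i)) < δ/2}.Nonempty :=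
      ⟨S2, hS20, hS2 S2 le_rfl⟩
    refine ⟨x0, ks i, lt_of_lt_of_le (show T < T + 1 by linarith) (le_csInf hne2 ?_)⟩
    rintro t ⟨ht0, htlt⟩
    by_contra hcon
    push_neg at hcon
    rw [hBeq] at htlt
    exact absurd htlt (not_lt.2 (hfar t ht0 hcon.le))
end

section
/- Suppose there exist a point (x*, k*) ∈ X × K, a sequence (xₙ, kₙ) → (x*, k*) in X × K, a point x' ∈ ω(x*, k*), and a number ε > 0 such that dist(x', ω(xₙ, kₙ)) > ε for every n. Then the parameter-dependent semiflow possesses τ₂-slow relaxations. -/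
open Filter Topology Metric Set MeasureTheory
open scoped ENNReal

namespace PSemiflow

variable {X K : Type*} [MetricSpace X] [MetricSpace K] (S : PSemiflow X K)

/-- The relaxation time `τ₂(x,k,ε)`: Lebesgue measure of the set of times the motion
spends outside the `ε`-neighbourhood of `ω(x,k)`. -/
noncomputable def tau2 (x : X) (k : K) (ε : ℝ) : ℝ≥0∞ :=
  volume {t : ℝ | 0 ≤ t ∧ ε ≤ infDist (S.f t x k) (S.omega x k)}

/-- The system possesses τ₂-slow relaxations. -/
def SlowTau2 : Prop := ∃ ε > (0:ℝ), ∀ T > (0:ℝ), ∃ x k, ENNReal.ofReal T < S.tau2 x k ε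

end PSemiflow

/-- Uniform shadowing on a compact time interval: trajectories with nearby initial
data stay uniformly close on `[0, M]`. -/
lemma PSemiflow.shadow_s2 {X K : Type*} [MetricSpace X] [CompactSpace X]
    [MetricSpace K] [CompactSpace K] (S : PSemiflow X K) (M : ℝ) (x0 : X) (k0 : K)
    {e : ℝ} (he : 0 < e) :
    ∃ η > (0:ℝ), ∀ x k, dist x x0 < η → dist k k0 < η →
      ∀ t ∈ Icc (0:ℝ) M, dist (S.f t x k) (S.f t x0 k0) < e := by
  have hscomp : IsCompact (Icc (0:ℝ) M ×ˢ (univ : Set (X × K))) :=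
    isCompact_Icc.prod isCompact_univ
  have hsub : (Icc (0:ℝ) M ×ˢ (univ : Set (X × K))) ⊆ {p : ℝ × X × K | 0 ≤ p.1} := by
    rintro ⟨t, x, k⟩ ⟨ht, -⟩; exact ht.1
  have hcont : ContinuousOn (fun p : ℝ × X × K => S.f p.1 p.2.1 p.2.2)
      (Icc (0:ℝ) M ×ˢ (univ : Set (X × K))) := S.cont.mono hsub
  have huc := hscomp.uniformContinuousOn_of_continuous hcont
  obtain ⟨η, hη, H⟩ := Metric.uniformContinuousOn_iff.mp huc e he
  refine ⟨η, hη, fun x k hx hk t ht => ?_⟩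
  have h1 : ((t, x, k) : ℝ × X × K) ∈ Icc (0:ℝ) M ×ˢ (univ : Set (X × K)) :=
    ⟨ht, mem_univ _⟩
  have h2 : ((t, x0, k0) : ℝ × X × K) ∈ Icc (0:ℝ) M ×ˢ (univ : Set (X × K)) :=
    ⟨ht, mem_univ _⟩
  refine H _ h1 _ h2 ?_
  have hde : dist ((t, x, k) : ℝ × X × K) ((t, x0, k0) : ℝ × X × K)
      = max (dist t t) (max (dist x x0) (dist k k0)) := by
    rw [Prod.dist_eq, Prod.dist_eq]
  rw [hde, dist_self]
  simp only [max_lt_iff]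
  exact ⟨hη, hx, hk⟩

/-- Theorem 2.3: if there are `(x*,k*)`, a sequence `(xₙ,kₙ) → (x*,k*)`, a point
`x' ∈ ω(x*,k*)` and `ε > 0` with `dist(x', ω(xₙ,kₙ)) > ε` for all `n`, then the
system possesses τ₂-slow relaxations. -/
theorem omega_bifurcation_slowTau2 {X K : Type*} [MetricSpace X] [CompactSpace X]
    [MetricSpace K] [CompactSpace K] (S : PSemiflow X K)
    (h : ∃ (xstar : X) (kstar : K) (xs : ℕ → X) (ks : ℕ → K) (x' : X) (ε : ℝ), 0 < ε ∧
      Tendsto xs atTop (𝓝 xstar) ∧ Tendsto ks atTop (𝓝 kstar) ∧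
      x' ∈ S.omega xstar kstar ∧ ∀ n, infDist x' (S.omega (xs n) (ks n)) > ε) :
    S.SlowTau2 := by
  obtain ⟨xstar, kstar, xs, ks, x', ε, hε, hxs, hks, hx', hfar⟩ := h
  obtain ⟨u, hu0, hutop, hulim⟩ := hx'
  -- shift so that all times are ≥ 1
  obtain ⟨M0, hM0⟩ := (hutop.eventually_ge_atTop 1).exists_forall_of_atTop
  have hshift : Tendsto (fun m : ℕ => m + M0) atTop atTop :=
    tendsto_atTop_mono (fun m => Nat.le_add_right m M0) tendsto_id
  set u' : ℕ → ℝ := fun m => u (m + M0) with hu'def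
  have hu'1 : ∀ m, 1 ≤ u' m := fun m => hM0 _ (Nat.le_add_left _ _)
  have hu'top : Tendsto u' atTop atTop := hutop.comp hshift
  have hu'lim : Tendsto (fun m => S.f (u' m) xstar kstar) atTop (𝓝 x') :=
    hulim.comp hshift
  -- the points one time-unit before the visits to x'
  set c : ℕ → X := fun m => S.f (u' m - 1) xstar kstar with hcdef
  obtain ⟨v, -, σ, hσmono, hcv⟩ := isCompact_univ.tendsto_subseq (fun m => mem_univ (c m))
  set tt : ℕ → ℝ := fun m => u' (σ m) with httdef
  have htt1 : ∀ m, 1 ≤ tt m := fun m => hu'1 _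
  have htttop : Tendsto tt atTop atTop := hu'top.comp hσmono.tendsto_atTop
  have hcc : ∀ m, c (σ m) = S.f (tt m - 1) xstar kstar := fun m => rfl
  -- `f 1 v kstar = x'`
  have hcont1 : Continuous fun z : X => S.f 1 z kstar := by
    refine S.cont.comp_continuous (f := fun z : X => ((1:ℝ), z, kstar)) ?_ ?_
    · exact continuous_const.prodMk (continuous_id.prodMk continuous_const)
    · intro z
      show (0:ℝ) ≤ 1
      norm_num
  have hfv : S.f 1 v kstar = x' := by
    have h1 : Tendsto (fun m => S.f 1 (c (σ m)) kstar) atTop (𝓝 (S.f 1 v kstar)) :=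
      (hcont1.tendsto v).comp hcv
    have h2 : (fun m => S.f 1 (c (σ m)) kstar) = fun m => S.f (tt m) xstar kstar := by
      funext m
      rw [hcc, S.semigroup 1 (tt m - 1) zero_le_one (by linarith [htt1 m])]
      norm_num
    have h3 : Tendsto (fun m => S.f (tt m) xstar kstar) atTop (𝓝 x') :=
      hu'lim.comp hσmono.tendsto_atTop
    rw [h2] at h1
    exact tendsto_nhds_unique h1 h3
  -- continuity of the trajectory of `v` at time 1: get δ
  have hψ : ContinuousWithinAt (fun s => S.f s v kstar) {s : ℝ | 0 ≤ s} 1 := by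
    have hco : ContinuousOn (fun s : ℝ => S.f s v kstar) {s : ℝ | 0 ≤ s} := by
      have := ContinuousOn.comp (t := {p : ℝ × X × K | 0 ≤ p.1}) S.cont
        (f := fun s : ℝ => (s, v, kstar))
        ((continuous_id.prodMk (continuous_const.prodMk continuous_const)).continuousOn)
        (fun s hs => hs)
      exact this
    exact hco 1 (by norm_num : (1:ℝ) ∈ {s : ℝ | 0 ≤ s})
  obtain ⟨δ', hδ'pos, hδ'⟩ := Metric.continuousWithinAt_iff.mp hψ (ε/8) (by linarith)
  set δ : ℝ := min (δ'/2) (1/2) with hδdef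
  have hδpos : 0 < δ := by positivity
  have hδle : δ ≤ 1/2 := min_le_right _ _
  have hδlt : δ < δ' := lt_of_le_of_lt (min_le_left _ _) (by linarith)
  have hδprop : ∀ s : ℝ, 1 - δ ≤ s → s ≤ 1 → dist (S.f s v kstar) x' < ε/8 := by
    intro s hs1 hs2
    have h0s : (0:ℝ) ≤ s := by linarith
    have hd1 : dist s 1 < δ' := by
      rw [Real.dist_eq, abs_of_nonpos (by linarith)]
      linarith
    have := hδ' (x := s) h0s hd1
    rwa [hfv] at this
  -- shadowing near v on [0,1]
  obtain ⟨η, hηpos, hη⟩ := S.shadow_s2 1 v kstar (e := ε/8) (by linarith)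
  -- arbitrarily late windows with good starting points
  have key : ∀ b : ℝ, ∃ m : ℕ, b ≤ tt m ∧ dist (c (σ m)) v < η := by
    intro b
    have h1 : ∀ᶠ m in atTop, b ≤ tt m := htttop.eventually_ge_atTop b
    have h2 : ∀ᶠ m in atTop, dist (c (σ m)) v < η := by
      obtain ⟨N, hN⟩ := Metric.tendsto_atTop.mp hcv η hηpos
      exact eventually_atTop.mpr ⟨N, fun m hm => hN m hm⟩
    exact (h1.and h2).exists
  -- now prove slow relaxations with ε/2
  refine ⟨ε/2, by linarith, fun T hT => ?_⟩
  obtain ⟨J, hJ⟩ := exists_nat_gt (T/δ)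
  have hJδ : T < J * δ := (div_lt_iff₀ hδpos).mp hJ
  -- recursive selection of J windows spaced ≥ 1 apart
  obtain ⟨G, hG0, hGs⟩ : ∃ G : ℕ → ℕ,
      (1 ≤ tt (G 0) ∧ dist (c (σ (G 0))) v < η) ∧
      ∀ i, tt (G i) + 1 ≤ tt (G (i+1)) ∧ dist (c (σ (G (i+1)))) v < η :=
    ⟨fun i => Nat.rec (key 1).choose (fun _ prev => (key (tt prev + 1)).choose) i,
      (key 1).choose_spec, fun i => (key (tt _ + 1)).choose_spec⟩
  have hTt1 : ∀ i, 1 ≤ tt (G i) := fun i => htt1 _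
  have hTgood : ∀ i, dist (c (σ (G i))) v < η := by
    intro i
    cases i with
    | zero => exact hG0.2
    | succ i => exact (hGs i).2
  have hTlt : ∀ i j, i < j → tt (G i) + 1 ≤ tt (G j) := by
    intro i j hij
    induction j with
    | zero => omega
    | succ j ih =>
      rcases Nat.lt_succ_iff_lt_or_eq.mp hij with hlt | heq
      · have ha := (hGs j).1
        have hb := ih hlt
        linarith
      · subst heq; exact (hGs i).1
  -- uniform approximation on [0, tt (G J)]
  obtain ⟨η₂, hη₂pos, hη₂⟩ := S.shadow_s2 (tt (G J)) xstar kstar (e := ε/4) (by linarith)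
  obtain ⟨N1, hN1⟩ := Metric.tendsto_atTop.mp hxs η₂ hη₂pos
  obtain ⟨N2, hN2⟩ := Metric.tendsto_atTop.mp hks η₂ hη₂pos
  have hxn : dist (xs (max N1 N2)) xstar < η₂ := hN1 _ (le_max_left _ _)
  have hkn : dist (ks (max N1 N2)) kstar < η₂ := hN2 _ (le_max_right _ _)
  refine ⟨xs (max N1 N2), ks (max N1 N2), ?_⟩
  set xn : X := xs (max N1 N2)
  set kn : K := ks (max N1 N2)
  -- each time in the union of windows is far from the omega-limit set
  have hEsub : (⋃ i ∈ Finset.range J, Ioc (tt (G i) - δ) (tt (G i))) ⊆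
      {t : ℝ | 0 ≤ t ∧ ε/2 ≤ infDist (S.f t xn kn) (S.omega xn kn)} := by
    intro t ht
    simp only [mem_iUnion, Finset.mem_range, exists_prop] at ht
    obtain ⟨i, hiJ, hti1, hti2⟩ := ht
    have hTi1 : 1 ≤ tt (G i) := hTt1 i
    have ht0 : (0:ℝ) ≤ t := by
      have := hδle
      linarith
    have htM : t ≤ tt (G J) := by
      have := hTlt i J hiJ
      linarith
    -- step 1: approximation by the limiting trajectory
    have step1 : dist (S.f t xn kn) (S.f t xstar kstar) < ε/4 :=
      hη₂ _ _ hxn hkn t ⟨ht0, htM⟩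
    -- step 2: rewrite the limiting trajectory via the point c (σ (G i))
    have hs0 : 1 - δ ≤ t - tt (G i) + 1 := by linarith
    have hs1 : t - tt (G i) + 1 ≤ 1 := by linarith
    have hsnn : (0:ℝ) ≤ t - tt (G i) + 1 := by linarith [hδle]
    have step2 : S.f t xstar kstar = S.f (t - tt (G i) + 1) (c (σ (G i))) kstar := by
      rw [hcc, S.semigroup (t - tt (G i) + 1) (tt (G i) - 1) hsnn (by linarith)]
      congr 1
      ring
    -- step 3: shadowing near v
    have step3 : dist (S.f (t - tt (G i) + 1) (c (σ (G i))) kstar)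
        (S.f (t - tt (G i) + 1) v kstar) < ε/8 :=
      hη _ _ (hTgood i) (by rw [dist_self]; exact hηpos) _ ⟨hsnn, hs1⟩
    -- step 4: trajectory of v is near x'
    have step4 : dist (S.f (t - tt (G i) + 1) v kstar) x' < ε/8 := hδprop _ hs0 hs1
    have hclose : dist (S.f t xn kn) x' < ε/2 := by
      calc dist (S.f t xn kn) x'
          ≤ dist (S.f t xn kn) (S.f t xstar kstar)
            + dist (S.f t xstar kstar) (S.f (t - tt (G i) + 1) v kstar)
            + dist (S.f (t - tt (G i) + 1) v kstar) x' := dist_triangle4 _ _ _ _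
        _ < ε/4 + ε/8 + ε/8 := by
            refine add_lt_add (add_lt_add step1 ?_) step4
            rw [step2]; exact step3
        _ = ε/2 := by ring
    refine ⟨ht0, ?_⟩
    have hle : infDist x' (S.omega xn kn)
        ≤ infDist (S.f t xn kn) (S.omega xn kn) + dist x' (S.f t xn kn) :=
      Metric.infDist_le_infDist_add_dist
    have hd : dist x' (S.f t xn kn) < ε/2 := by
      rw [dist_comm]; exact hclose
    have hf := hfar (max N1 N2)
    linarith
  -- the measure of the union of windows is J * δ > T
  have hEmeas : volume (⋃ i ∈ Finset.range J, Ioc (tt (G i) - δ) (tt (G i)))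
      = (J : ℝ≥0∞) * ENNReal.ofReal δ := by
    rw [MeasureTheory.measure_biUnion_finset]
    · simp only [Real.volume_Ioc, sub_sub_cancel, Finset.sum_const, Finset.card_range,
        nsmul_eq_mul]
    · intro i hi j hj hij
      simp only [Function.onFun]
      rcases lt_or_gt_of_ne hij with hlt | hlt
      · have hsp := hTlt i j hlt
        refine Set.disjoint_left.mpr fun t ht1 ht2 => ?_
        have ha := ht1.2; have hb := ht2.1
        linarith [hδle]
      · have hsp := hTlt j i hlt
        refine Set.disjoint_left.mpr fun t ht1 ht2 => ?_
        have ha := ht1.1; have hb := ht2.2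
        linarith [hδle]
    · exact fun i _ => measurableSet_Ioc
  have hTlt' : ENNReal.ofReal T
      < volume (⋃ i ∈ Finset.range J, Ioc (tt (G i) - δ) (tt (G i))) := by
    rw [hEmeas]
    calc ENNReal.ofReal T < ENNReal.ofReal ((J : ℝ) * δ) :=
          (ENNReal.ofReal_lt_ofReal_iff (by linarith)).mpr hJδ
      _ = (J : ℝ≥0∞) * ENNReal.ofReal δ := by
          rw [ENNReal.ofReal_mul (by positivity)]
          congr 1
          exact ENNReal.ofReal_natCast J
  exact lt_of_lt_of_le hTlt' (measure_mono hEsub)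
end

section
/- Suppose there exist a point k* ∈ K, a sequence kₙ → k* in K, a point x' ∈ ω(k*), and a number ε > 0 such that dist(x', ω(kₙ)) > ε for every n. Then the parameter-dependent semiflow possesses η₂-slow relaxations. -/
open Filter Topology Metric Set MeasureTheory
open scoped ENNReal

namespace PSemiflow

variable {X K : Type*} [MetricSpace X] [MetricSpace K] (S : PSemiflow X K)

/-- The relaxation time `η₂(x,k,ε)`: Lebesgue measure of the set of times the motion
spends outside the `ε`-neighbourhood of `ω(k)`. -/
noncomputable def eta2 (x : X) (k : K) (ε : ℝ) : ℝ≥0∞ :=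
  volume {t : ℝ | 0 ≤ t ∧ ε ≤ infDist (S.f t x k) (S.omegaK k)}

/-- The system possesses η₂-slow relaxations. -/
def SlowEta2 : Prop := ∃ ε > (0:ℝ), ∀ T > (0:ℝ), ∃ x k, ENNReal.ofReal T < S.eta2 x k ε

end PSemiflow

/-- Uniformly over `X × K`, points move less than `θ` in small nonnegative time. -/
lemma PSemiflow.small_time {X K : Type*} [MetricSpace X] [CompactSpace X]
    [MetricSpace K] [CompactSpace K] (S : PSemiflow X K) {θ : ℝ} (hθ : 0 < θ) :
    ∃ δ : ℝ, 0 < δ ∧ δ ≤ 1 ∧ ∀ s : ℝ, 0 ≤ s → s ≤ δ → ∀ y k, dist (S.f s y k) y < θ := by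
  set C : Set (ℝ × X × K) := Icc (0:ℝ) 1 ×ˢ (univ : Set (X × K)) with hC
  have hCc : IsCompact C := isCompact_Icc.prod isCompact_univ
  have hsub : C ⊆ {p : ℝ × X × K | 0 ≤ p.1} := by
    rintro ⟨a, b⟩ ⟨ha, -⟩; exact ha.1
  have hu : UniformContinuousOn (fun p : ℝ × X × K => S.f p.1 p.2.1 p.2.2) C :=
    hCc.uniformContinuousOn_of_continuous (S.cont.mono hsub)
  obtain ⟨δ₀, hδ₀, hδ⟩ := Metric.uniformContinuousOn_iff.mp hu θ hθ
  refine ⟨min (δ₀ / 2) 1, by positivity, min_le_right _ _, fun s hs0 hs y k => ?_⟩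
  have hs1 : s ≤ 1 := hs.trans (min_le_right _ _)
  have hmem1 : ((s, y, k) : ℝ × X × K) ∈ C := ⟨⟨hs0, hs1⟩, trivial⟩
  have hmem2 : ((0, y, k) : ℝ × X × K) ∈ C := ⟨⟨le_refl _, zero_le_one⟩, trivial⟩
  have hd : dist ((s, y, k) : ℝ × X × K) ((0, y, k) : ℝ × X × K) < δ₀ := by
    have hhalf : s ≤ δ₀ / 2 := hs.trans (min_le_left _ _)
    rw [Prod.dist_eq, Prod.dist_eq, dist_self, dist_self, Real.dist_eq, sub_zero,
      abs_of_nonneg hs0, max_self, max_eq_left hs0]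
    linarith
  have := hδ _ hmem1 _ hmem2 hd
  simpa [S.map_zero] using this

/-- Uniform continuity of the trajectory of a fixed point in the parameter,
uniformly on compact time intervals. -/
lemma PSemiflow.param_unif {X K : Type*} [MetricSpace X] [CompactSpace X]
    [MetricSpace K] [CompactSpace K] (S : PSemiflow X K) (x : X) {T' θ : ℝ}
    (hT' : 0 ≤ T') (hθ : 0 < θ) :
    ∃ δ' > (0:ℝ), ∀ k k' : K, dist k k' < δ' →
      ∀ s : ℝ, 0 ≤ s → s ≤ T' → dist (S.f s x k) (S.f s x k') < θ := by
  set C : Set (ℝ × X × K) := Icc (0:ℝ) T' ×ˢ ({x} ×ˢ (univ : Set K)) with hC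
  have hCc : IsCompact C := isCompact_Icc.prod (isCompact_singleton.prod isCompact_univ)
  have hsub : C ⊆ {p : ℝ × X × K | 0 ≤ p.1} := by
    rintro ⟨a, b⟩ ⟨ha, -⟩; exact ha.1
  have hu : UniformContinuousOn (fun p : ℝ × X × K => S.f p.1 p.2.1 p.2.2) C :=
    hCc.uniformContinuousOn_of_continuous (S.cont.mono hsub)
  obtain ⟨δ₀, hδ₀, hδ⟩ := Metric.uniformContinuousOn_iff.mp hu θ hθ
  refine ⟨δ₀, hδ₀, fun k k' hkk' s hs0 hsT => ?_⟩
  have hmem1 : ((s, x, k) : ℝ × X × K) ∈ C := ⟨⟨hs0, hsT⟩, rfl, trivial⟩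
  have hmem2 : ((s, x, k') : ℝ × X × K) ∈ C := ⟨⟨hs0, hsT⟩, rfl, trivial⟩
  have hd : dist ((s, x, k) : ℝ × X × K) ((s, x, k') : ℝ × X × K) < δ₀ := by
    simp only [Prod.dist_eq, dist_self]
    calc max 0 (max 0 (dist k k')) = dist k k' := by
          rw [max_eq_right dist_nonneg, max_eq_right dist_nonneg]
    _ < δ₀ := hkk'
  exact hδ _ hmem1 _ hmem2 hd

/-- Theorem 2.4: if there are `k* ∈ K`, a sequence `kₙ → k*`, a point `x' ∈ ω(k*)`
and `ε > 0` with `dist(x', ω(kₙ)) > ε` for all `n`, then the system possesses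
η₂-slow relaxations. -/
theorem omegaK_bifurcation_slowEta2 {X K : Type*} [MetricSpace X] [CompactSpace X]
    [MetricSpace K] [CompactSpace K] (S : PSemiflow X K)
    (h : ∃ (kstar : K) (ks : ℕ → K) (x' : X) (ε : ℝ), 0 < ε ∧
      Tendsto ks atTop (𝓝 kstar) ∧
      x' ∈ S.omegaK kstar ∧ ∀ n, infDist x' (S.omegaK (ks n)) > ε) :
    S.SlowEta2 := by
  obtain ⟨kstar, ks, x', ε, hε, hks, hx', hfar⟩ := h
  rw [PSemiflow.omegaK, Set.mem_iUnion] at hx'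
  obtain ⟨x, t, ht0, htop, hconv⟩ := hx'
  -- choose recurrence times
  have key : ∀ B : ℝ, ∃ s : ℝ, 0 ≤ s ∧ B ≤ s ∧ dist (S.f s x kstar) x' < ε / 8 := by
    intro B
    have h1 : ∀ᶠ n in atTop, B ≤ t n := htop.eventually (eventually_ge_atTop B)
    have h2 : ∀ᶠ n in atTop, dist (S.f (t n) x kstar) x' < ε / 8 := by
      have := hconv (Metric.ball_mem_nhds x' (by positivity : (0:ℝ) < ε / 8))
      simpa [Metric.mem_ball] using this
    obtain ⟨n, hn1, hn2⟩ := (h1.and h2).exists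
    exact ⟨t n, ht0 n, hn1, hn2⟩
  choose g hg0 hgB hgd using key
  set u : ℕ → ℝ := fun i => Nat.rec (g 0) (fun _ p => g (p + 1)) i with hu
  have hu0 : ∀ i, 0 ≤ u i := by rintro (_ | i) <;> exact hg0 _
  have hud : ∀ i, dist (S.f (u i) x kstar) x' < ε / 8 := by rintro (_ | i) <;> exact hgd _
  have husucc : ∀ i, u i + 1 ≤ u (i + 1) := fun i => hgB (u i + 1)
  have humono : Monotone u :=
    monotone_nat_of_le_succ fun i => by linarith [husucc i]
  have hult : ∀ i j : ℕ, i < j → u i + 1 ≤ u j := fun i j hij =>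
    (husucc i).trans (humono hij)
  refine ⟨ε / 2, by positivity, fun T hT => ?_⟩
  obtain ⟨δ, hδ0, hδ1, hA⟩ := S.small_time (θ := ε / 8) (by positivity)
  obtain ⟨m, hm⟩ := exists_nat_gt (T / δ)
  have hTm : T < m * δ := (div_lt_iff₀ hδ0).mp hm
  have hB := S.param_unif x (T' := u m) (θ := ε / 8) (hu0 m) (by positivity)
  obtain ⟨δ', hδ'0, hB⟩ := hB
  obtain ⟨n, hn⟩ : ∃ n, dist (ks n) kstar < δ' := by
    have hev : ∀ᶠ q in atTop, dist (ks q) kstar < δ' := by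
      have := hks (Metric.ball_mem_nhds kstar hδ'0)
      simpa [Metric.mem_ball] using this
    exact hev.exists
  refine ⟨x, ks n, ?_⟩
  have hsub : (⋃ i ∈ Finset.range m, Ico (u i) (u i + δ)) ⊆
      {t : ℝ | 0 ≤ t ∧ ε / 2 ≤ infDist (S.f t x (ks n)) (S.omegaK (ks n))} := by
    intro s hs
    simp only [Finset.mem_range, Set.mem_iUnion, Set.mem_Ico] at hs
    obtain ⟨i, him, hs1, hs2⟩ := hs
    have hs0 : 0 ≤ s := (hu0 i).trans hs1
    have hsum : s ≤ u m := by
      have h1 : u (i + 1) ≤ u m := humono (Nat.succ_le_of_lt him)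
      have h2 := husucc i
      linarith
    have hsemi := S.semigroup (s - u i) (u i) (by linarith) (hu0 i) x kstar
    rw [sub_add_cancel] at hsemi
    have d1 : dist (S.f s x kstar) (S.f (u i) x kstar) < ε / 8 := by
      rw [← hsemi]
      exact hA (s - u i) (by linarith) (by linarith) _ _
    have d2 : dist (S.f (u i) x kstar) x' < ε / 8 := hud i
    have d3 : dist (S.f s x (ks n)) (S.f s x kstar) < ε / 8 :=
      hB (ks n) kstar hn s hs0 hsum
    have dtot : dist (S.f s x (ks n)) x' < ε / 2 := by
      calc dist (S.f s x (ks n)) x'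
          ≤ dist (S.f s x (ks n)) (S.f s x kstar) + dist (S.f s x kstar) (S.f (u i) x kstar)
            + dist (S.f (u i) x kstar) x' := dist_triangle4 _ _ _ _
        _ < ε / 2 := by linarith
    refine ⟨hs0, ?_⟩
    have hle : infDist x' (S.omegaK (ks n)) ≤
        infDist (S.f s x (ks n)) (S.omegaK (ks n)) + dist x' (S.f s x (ks n)) :=
      infDist_le_infDist_add_dist
    have hfn := hfar n
    rw [dist_comm] at hle
    linarith
  have hdisj : (↑(Finset.range m) : Set ℕ).PairwiseDisjoint
      fun i => Ico (u i) (u i + δ) := by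
    intro i _ j _ hij
    have key : ∀ a b : ℕ, a < b → Disjoint (Ico (u a) (u a + δ)) (Ico (u b) (u b + δ)) := by
      intro a b hab
      rw [Set.disjoint_left]
      rintro s ⟨hs1, hs2⟩ ⟨hs3, hs4⟩
      have := hult a b hab
      linarith
    rcases lt_or_gt_of_ne hij with hlt | hlt
    · exact key i j hlt
    · exact (key j i hlt).symm
  have hmeas : volume (⋃ i ∈ Finset.range m, Ico (u i) (u i + δ)) =
      (m : ℝ≥0∞) * ENNReal.ofReal δ := by
    rw [measure_biUnion_finset hdisj (fun i _ => measurableSet_Ico)]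
    simp [Real.volume_Ico, Finset.sum_const, nsmul_eq_mul]
  have hmono : (m : ℝ≥0∞) * ENNReal.ofReal δ ≤ S.eta2 x (ks n) (ε / 2) := by
    rw [PSemiflow.eta2, ← hmeas]
    exact measure_mono hsub
  calc ENNReal.ofReal T < ENNReal.ofReal (m * δ) := by
        have hm0 : (0:ℝ) < (m : ℝ) := lt_trans (div_pos hT hδ0) hm
        rw [ENNReal.ofReal_lt_ofReal_iff (mul_pos hm0 hδ0)]
        exact hTm
    _ = (m : ℝ≥0∞) * ENNReal.ofReal δ := by
        rw [ENNReal.ofReal_mul (Nat.cast_nonneg m), ENNReal.ofReal_natCast]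
    _ ≤ S.eta2 x (ks n) (ε / 2) := hmono
end

section
/- Suppose there exist x ∈ X and k ∈ K such that the (k,x)-motion is whole and its α-limit set α(x,k) is not contained in the closure of ω(k). Then the parameter-dependent semiflow possesses η₂-slow relaxations. -/
open Filter Topology Metric Set MeasureTheory
open scoped ENNReal

namespace PSemiflow

variable {X K : Type*} [MetricSpace X] [MetricSpace K] (S : PSemiflow X K)

/-- The (k,x)-motion is whole: it extends to a full trajectory `φ : ℝ → X`. -/
def IsWholeMotion (x : X) (k : K) (φ : ℝ → X) : Prop :=
  φ 0 = x ∧ ∀ s t : ℝ, 0 ≤ t → S.f t (φ s) k = φ (s + t)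

end PSemiflow

/-- The α-limit set of a whole motion `φ`: all limits of `φ(tₙ)` with `tₙ → -∞`. -/
def alphaLimit {X : Type*} [MetricSpace X] (φ : ℝ → X) : Set X :=
  {y | ∃ t : ℕ → ℝ, Tendsto t atTop atBot ∧ Tendsto (fun n => φ (t n)) atTop (𝓝 y)}

/-- Theorem 2.6: if for some `x ∈ X`, `k ∈ K` the `(k,x)`-motion is whole and its
α-limit set is not contained in the closure of `ω(k)`, then the system possesses
η₂-slow relaxations. -/
theorem alpha_not_subset_closure_omegaK_slowEta2 {X K : Type*} [MetricSpace X]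
    [CompactSpace X] [MetricSpace K] [CompactSpace K] (S : PSemiflow X K)
    (h : ∃ (x : X) (k : K) (φ : ℝ → X), S.IsWholeMotion x k φ ∧
      ¬ alphaLimit φ ⊆ closure (S.omegaK k)) :
    S.SlowEta2 := by
  obtain ⟨x, k, φ, ⟨hφ0, hφ⟩, hns⟩ := h
  obtain ⟨y, hyα, hyc⟩ := Set.not_subset.mp hns
  -- ω(k) is nonempty
  have hΩne : (S.omegaK k).Nonempty := by
    obtain ⟨a, -, σ, hσ, ha⟩ :=
      isCompact_univ.tendsto_subseq (fun n : ℕ => Set.mem_univ (S.f (n : ℝ) x k))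
    refine ⟨a, Set.mem_iUnion.mpr ⟨x, ⟨fun n => ((σ n : ℕ) : ℝ), fun n => Nat.cast_nonneg _,
      ?_, ha⟩⟩⟩
    exact tendsto_natCast_atTop_atTop.comp hσ.tendsto_atTop
  set d : ℝ := infDist y (S.omegaK k) with hd_def
  have hd : 0 < d := by
    rcases lt_or_eq_of_le (infDist_nonneg : 0 ≤ d) with h' | h'
    · exact h'
    · exact absurd ((mem_closure_iff_infDist_zero hΩne).mpr h'.symm) hyc
  set ε : ℝ := d / 3 with hε_def
  have hε : 0 < ε := by positivity
  -- uniform continuity near (0, y, k)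
  have hc : ContinuousWithinAt (fun p : ℝ × X × K => S.f p.1 p.2.1 p.2.2)
      {p : ℝ × X × K | 0 ≤ p.1} (0, y, k) := S.cont _ (by simp [Set.mem_setOf_eq])
  have hc' : Tendsto (fun p : ℝ × X × K => S.f p.1 p.2.1 p.2.2)
      (𝓝[{p : ℝ × X × K | 0 ≤ p.1}] (0, y, k)) (𝓝 y) := by
    simpa [ContinuousWithinAt, S.map_zero] using hc
  obtain ⟨δ, hδ, hball⟩ := Metric.tendsto_nhdsWithin_nhds.mp hc' ε hε
  set τ : ℝ := δ / 2 with hτ_def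
  have hτ : 0 < τ := by positivity
  -- the key "far" estimate
  have hfar : ∀ s : ℝ, dist (φ s) y < τ → ∀ t : ℝ, t ∈ Set.Icc (0:ℝ) τ →
      ε ≤ infDist (φ (s + t)) (S.omegaK k) := by
    intro s hs t ht
    have hmem : ((t, φ s, k) : ℝ × X × K) ∈ {p : ℝ × X × K | 0 ≤ p.1} := ht.1
    have hdist : dist ((t, φ s, k) : ℝ × X × K) ((0, y, k) : ℝ × X × K) < δ := by
      rw [Prod.dist_eq, Prod.dist_eq]
      have h1 : dist t (0:ℝ) < δ := by
        rw [Real.dist_eq, sub_zero, abs_of_nonneg ht.1]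
        exact lt_of_le_of_lt ht.2 (by linarith)
      have h2 : dist (φ s) y < δ := lt_of_lt_of_le hs (by linarith)
      have h3 : dist k k < δ := by simp [hδ]
      exact max_lt h1 (max_lt h2 h3)
    have hclose : dist (S.f t (φ s) k) y < ε := hball hmem hdist
    rw [← hφ s t ht.1]
    have htri : d ≤ infDist (S.f t (φ s) k) (S.omegaK k) + dist y (S.f t (φ s) k) :=
      infDist_le_infDist_add_dist
    rw [dist_comm] at hclose
    have : d = 3 * ε := by rw [hε_def]; ring
    linarith
  -- the motion visits the ball around y at arbitrarily negative times
  obtain ⟨tseq, hts, hφt⟩ := hyα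
  have hvisit : ∀ B : ℝ, ∃ s ≤ B, dist (φ s) y < τ := by
    intro B
    have h1 : ∀ᶠ n in atTop, tseq n ≤ B := hts.eventually (eventually_le_atBot B)
    have h2 : ∀ᶠ n in atTop, dist (φ (tseq n)) y < τ :=
      (Metric.tendsto_nhds.mp hφt τ hτ)
    obtain ⟨n, hn1, hn2⟩ := (h1.and h2).exists
    exact ⟨tseq n, hn1, hn2⟩
  choose g hg1 hg2 using hvisit
  -- recursive sequence of visit times separated by more than τ
  set s : ℕ → ℝ := fun n => Nat.rec (g 0) (fun _ prev => g (prev - τ - 1)) n with hs_def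
  have hs_succ : ∀ n, s (n + 1) ≤ s n - τ - 1 := fun n => hg1 (s n - τ - 1)
  have hs_ball : ∀ n, dist (φ (s n)) y < τ := by
    intro n
    cases n with
    | zero => exact hg2 0
    | succ m => exact hg2 (s m - τ - 1)
  have hs_anti : ∀ m n : ℕ, m ≤ n → s n ≤ s m := by
    intro m n hmn
    induction n with
    | zero => simp_all
    | succ p ih =>
      rcases Nat.lt_or_ge m (p + 1) with h' | h'
      · have := ih (Nat.lt_succ_iff.mp h')
        have := hs_succ p
        linarith
      · have : m = p + 1 := le_antisymm hmn h'
        simp [this]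
  -- main estimate
  refine ⟨ε, hε, fun T hT => ?_⟩
  obtain ⟨N, hN⟩ := exists_nat_gt (T / τ)
  have hTN : T < (N + 1) * τ := by
    have := (div_lt_iff₀ hτ).mp hN
    nlinarith
  set u : ℝ := s N with hu_def
  refine ⟨φ u, k, ?_⟩
  set A : Set ℝ := {t : ℝ | 0 ≤ t ∧ ε ≤ infDist (S.f t (φ u) k) (S.omegaK k)} with hA_def
  set I : ℕ → Set ℝ := fun m => Set.Icc (s m - u) (s m - u + τ) with hI_def
  have hIsub : ∀ m ≤ N, I m ⊆ A := by
    intro m hm t ht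
    have h0 : 0 ≤ s m - u := by have := hs_anti m N hm; simp [hu_def]; linarith
    have ht0 : 0 ≤ t := le_trans h0 ht.1
    constructor
    · exact ht0
    · have key : S.f t (φ u) k = φ (s m + (t - (s m - u))) := by
        rw [hφ u t ht0]; ring_nf
      rw [key]
      exact hfar (s m) (hs_ball m) (t - (s m - u)) ⟨by linarith [ht.1], by linarith [ht.2]⟩
  have key : ∀ a b : ℕ, a < b → Disjoint (I a) (I b) := by
    intro a b hab'
    have hgap : s b + τ < s a := by
      have h1 : s b ≤ s (a + 1) := hs_anti (a + 1) b hab'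
      have h2 := hs_succ a
      linarith
    refine Set.disjoint_left.mpr fun t hta htb => ?_
    rcases hta with ⟨ha1, ha2⟩
    rcases htb with ⟨hb1, hb2⟩
    simp only [hI_def] at *
    linarith [ha1, hb2]
  have hdisj : (↑(Finset.range (N + 1)) : Set ℕ).PairwiseDisjoint I := by
    intro a _ b _ hab
    rcases Nat.lt_or_ge a b with h' | h'
    · exact key a b h'
    · exact (key b a (lt_of_le_of_ne h' (Ne.symm hab))).symm
  have hmeas : volume (⋃ m ∈ Finset.range (N + 1), I m) = (N + 1) * ENNReal.ofReal τ := by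
    rw [measure_biUnion_finset hdisj (fun m _ => measurableSet_Icc)]
    have : ∀ m, volume (I m) = ENNReal.ofReal τ := by
      intro m; rw [hI_def]; simp [Real.volume_Icc]
    simp only [this, Finset.sum_const, Finset.card_range, nsmul_eq_mul]
    push_cast
    ring
  have hsub : (⋃ m ∈ Finset.range (N + 1), I m) ⊆ A := by
    intro t ht
    obtain ⟨m, hm, htm⟩ := Set.mem_iUnion₂.mp ht
    exact hIsub m (Nat.lt_succ_iff.mp (Finset.mem_range.mp hm)) htm
  have hvol : (N + 1 : ℝ≥0∞) * ENNReal.ofReal τ ≤ S.eta2 (φ u) k ε := by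
    rw [PSemiflow.eta2, ← hmeas]
    exact measure_mono hsub
  refine lt_of_lt_of_le ?_ hvol
  have : ((N : ℝ≥0∞) + 1) * ENNReal.ofReal τ = ENNReal.ofReal ((N + 1) * τ) := by
    rw [ENNReal.ofReal_mul (by positivity)]
    congr 1
    rw [ENNReal.ofReal_add (by positivity) zero_le_one]
    simp
  rw [this]
  exact (ENNReal.ofReal_lt_ofReal_iff (by positivity)).mpr hTN
end

section
/- For a single semiflow f on a compact metric space X and for every ε > 0, the function x ↦ η₁(x,ε) = inf{t ≥ 0 : dist(f(t,x), ω_f) < ε} is bounded above on X; that is, there is a constant C such that η₁(x,ε) ≤ C for every x ∈ X. -/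
open Filter Topology Metric Set MeasureTheory
open scoped ENNReal

/-- A semiflow on a metric space `X`: a map `f : [0,∞) × X → X` (encoded with time
in `ℝ`, with conditions only for nonnegative times), continuous on `[0,∞) × X`,
satisfying the semigroup identities, and injective for each fixed time. -/
structure Semiflow (X : Type*) [MetricSpace X] where
  f : ℝ → X → X
  cont : ContinuousOn (fun p : ℝ × X => f p.1 p.2) {p : ℝ × X | 0 ≤ p.1}
  map_zero : ∀ x, f 0 x = x
  semigroup : ∀ t t' : ℝ, 0 ≤ t → 0 ≤ t' → ∀ x, f t (f t' x) = f (t + t') x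
  inj : ∀ t : ℝ, 0 ≤ t → Function.Injective fun x => f t x

namespace Semiflow

variable {X : Type*} [MetricSpace X] (S : Semiflow X)

/-- The ω-limit set `ω(x)`: all limits of `f(tₙ,x)` along sequences `tₙ → ∞`. -/
def omega (x : X) : Set X :=
  {y | ∃ t : ℕ → ℝ, (∀ n, 0 ≤ t n) ∧ Tendsto t atTop atTop ∧
      Tendsto (fun n => S.f (t n) x) atTop (𝓝 y)}

/-- The complete ω-limit set `ω_f = ⋃ₓ ω(x)`. -/
def omegaF : Set X := ⋃ x : X, S.omega x

/-- `η₁(x,ε)`: time of the first entry into the `ε`-neighbourhood of `ω_f`. -/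
noncomputable def eta1 (x : X) (ε : ℝ) : ℝ :=
  sInf {t : ℝ | 0 ≤ t ∧ infDist (S.f t x) S.omegaF < ε}

end Semiflow

section Aux

variable {X : Type*} [MetricSpace X] [CompactSpace X] (S : Semiflow X)

omit [CompactSpace X] in
lemma continuous_slice (T : ℝ) (hT : 0 ≤ T) : Continuous (fun y => S.f T y) := by
  have : Continuous (fun y : X => ((T, y) : ℝ × X)) := by fun_prop
  exact S.cont.comp_continuous this (fun y => hT)

lemma exists_entry (ε : ℝ) (hε : 0 < ε) (x : X) :
    ∃ T : ℝ, 0 ≤ T ∧ infDist (S.f T x) S.omegaF < ε := by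
  obtain ⟨y, -, φ, hφ, hconv⟩ :=
    isCompact_univ.tendsto_subseq (fun n : ℕ => mem_univ (S.f n x))
  have hy : y ∈ S.omegaF := by
    refine mem_iUnion.2 ⟨x, (fun n => (φ n : ℝ)), fun n => Nat.cast_nonneg _, ?_, hconv⟩
    exact tendsto_natCast_atTop_atTop.comp hφ.tendsto_atTop
  obtain ⟨N, hN⟩ := Metric.tendsto_atTop.1 hconv ε hε
  refine ⟨(φ N : ℝ), Nat.cast_nonneg _, ?_⟩
  calc infDist (S.f (φ N : ℝ) x) S.omegaF ≤ dist (S.f (φ N : ℝ) x) y :=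
        infDist_le_dist_of_mem hy
    _ < ε := hN N le_rfl

end Aux

/-- Proposition 2.2: for a single semiflow `η₁(·,ε)` is bounded above on `X` for
every `ε > 0`. -/
theorem eta1_bounded {X : Type*} [MetricSpace X] [CompactSpace X] (S : Semiflow X) :
    ∀ ε > (0:ℝ), ∃ C : ℝ, ∀ x : X, S.eta1 x ε ≤ C := by
  intro ε hε
  choose T hT0 hTlt using exists_entry S ε hε
  set U : X → Set X := fun x => {y | infDist (S.f (T x) y) S.omegaF < ε} with hU
  have hUopen : ∀ x, IsOpen (U x) := by
    intro x
    have : Continuous fun y => infDist (S.f (T x) y) S.omegaF :=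
      (continuous_infDist_pt _).comp (continuous_slice S (T x) (hT0 x))
    exact isOpen_lt this continuous_const
  have hcover : univ ⊆ ⋃ x : X, U x := fun y _ => mem_iUnion.2 ⟨y, hTlt y⟩
  obtain ⟨s, hs⟩ := isCompact_univ.elim_finite_subcover U hUopen hcover
  rcases s.eq_empty_or_nonempty with rfl | hsne
  · refine ⟨0, fun x => absurd (hs (mem_univ x)) (by simp)⟩
  refine ⟨s.sup' hsne T, fun x => ?_⟩
  obtain ⟨z, hz, hxz⟩ := mem_iUnion₂.1 (hs (mem_univ x))
  have hmem : T z ∈ {t : ℝ | 0 ≤ t ∧ infDist (S.f t x) S.omegaF < ε} := ⟨hT0 z, hxz⟩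
  have := csInf_le ⟨0, fun t ht => ht.1⟩ hmem
  exact this.trans (Finset.le_sup' T hz)
end

section
/- Let f be a semiflow on a compact metric space X possessing η₂-slow relaxations: for some ε > 0 the function x ↦ η₂(x,ε) = Lebesgue measure of {t ≥ 0 : dist(f(t,x), ω_f) ≥ ε} is unbounded above on X. Then there exists a non-wandering point x* ∈ X which does not belong to the closure of ω_f. -/
open Filter Topology Metric Set MeasureTheory
open scoped ENNReal

namespace Semiflow

variable {X : Type*} [MetricSpace X] (S : Semiflow X)

/-- `η₂(x,ε)`: Lebesgue measure of the set of times spent outside the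
`ε`-neighbourhood of `ω_f`. -/
noncomputable def eta2 (x : X) (ε : ℝ) : ℝ≥0∞ :=
  volume {t : ℝ | 0 ≤ t ∧ ε ≤ infDist (S.f t x) S.omegaF}

/-- The semiflow possesses η₂-slow relaxations. -/
def SlowEta2 : Prop := ∃ ε > (0:ℝ), ∀ T > (0:ℝ), ∃ x, ENNReal.ofReal T < S.eta2 x ε

/-- `x` is a non-wandering point of the semiflow. -/
def NonWandering (x : X) : Prop :=
  ∀ U ∈ 𝓝 x, ∀ T > (0:ℝ), ∃ t > T, ((fun y => S.f t y) '' U ∩ U).Nonempty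

end Semiflow

/-- Theorem 3.1: if a semiflow possesses η₂-slow relaxations, then there is a
non-wandering point `x* ∈ X` which does not belong to the closure of `ω_f`. -/
theorem slowEta2_nonwandering {X : Type*} [MetricSpace X] [CompactSpace X]
    (S : Semiflow X) (h : S.SlowEta2) :
    ∃ xstar : X, S.NonWandering xstar ∧ xstar ∉ closure S.omegaF := by
  obtain ⟨ε, hε, hslow⟩ := h
  by_contra hcon
  push_neg at hcon
  have key : ∀ x : X, ε ≤ infDist x S.omegaF →
      ∃ U ∈ 𝓝 x, ∃ T > (0:ℝ), ∀ s > T, ¬((fun y => S.f s y) '' U ∩ U).Nonempty := by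
    intro x hx
    have hxc : x ∉ closure S.omegaF := by
      intro hmem
      have h0 := Metric.infDist_zero_of_mem_closure hmem
      linarith
    have hnw : ¬ S.NonWandering x := fun hnw => hxc (hcon x hnw)
    unfold Semiflow.NonWandering at hnw
    push_neg at hnw
    obtain ⟨U, hU, T, hT, hd⟩ := hnw
    exact ⟨U, hU, T, hT, fun s hs => by
      have := hd s hs
      simp [Set.not_nonempty_iff_eq_empty, this]⟩
  choose! U hU T hT hdisj using key
  have hPc : IsCompact {x : X | ε ≤ infDist x S.omegaF} :=
    (isClosed_le continuous_const (continuous_infDist_pt _)).isCompact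
  obtain ⟨t, htP, hcover⟩ := hPc.elim_nhds_subcover U (fun x hx => hU x hx)
  set Tm : ℝ := 1 + ∑ x ∈ t, T x with hTm
  have hTnonneg : ∀ x ∈ t, 0 ≤ T x := fun x hx => (hT x (htP x hx)).le
  have hsum_nonneg : 0 ≤ ∑ x ∈ t, T x := Finset.sum_nonneg hTnonneg
  have hTmpos : (0:ℝ) < Tm := by simp only [hTm]; linarith
  obtain ⟨x₀, hx₀⟩ := hslow (2 * Tm) (by linarith)
  set A : Set ℝ := {s : ℝ | 0 ≤ s ∧ ε ≤ infDist (S.f s x₀) S.omegaF} with hA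
  have hAsub : A ⊆ ⋃ x ∈ t, {s | s ∈ A ∧ S.f s x₀ ∈ U x} := by
    intro s hs
    have hm : S.f s x₀ ∈ ⋃ x ∈ t, U x := hcover hs.2
    simp only [mem_iUnion, exists_prop] at hm ⊢
    obtain ⟨x, hx, hmem⟩ := hm
    exact ⟨x, hx, hs, hmem⟩
  have hBx : ∀ x ∈ t, volume {s | s ∈ A ∧ S.f s x₀ ∈ U x} ≤ ENNReal.ofReal (2 * T x) := by
    intro x hx
    rcases Set.eq_empty_or_nonempty {s | s ∈ A ∧ S.f s x₀ ∈ U x} with he | ⟨a, ha⟩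
    · simp [he]
    · have hsub : {s | s ∈ A ∧ S.f s x₀ ∈ U x} ⊆ Icc (a - T x) (a + T x) := by
        intro s hs
        have hs0 : (0:ℝ) ≤ s := hs.1.1
        have ha0 : (0:ℝ) ≤ a := ha.1.1
        constructor
        · by_contra hlt
          push_neg at hlt
          have hgap : a - s > T x := by linarith
          refine hdisj x (htP x hx) (a - s) hgap ⟨S.f a x₀, ⟨S.f s x₀, hs.2, ?_⟩, ha.2⟩
          have hsg := S.semigroup (a - s) s (by linarith [hTnonneg x hx]) hs0 x₀
          show S.f (a - s) (S.f s x₀) = S.f a x₀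
          rw [hsg]; ring_nf
        · by_contra hlt
          push_neg at hlt
          have hgap : s - a > T x := by linarith
          refine hdisj x (htP x hx) (s - a) hgap ⟨S.f s x₀, ⟨S.f a x₀, ha.2, ?_⟩, hs.2⟩
          have hsg := S.semigroup (s - a) a (by linarith [hTnonneg x hx]) ha0 x₀
          show S.f (s - a) (S.f a x₀) = S.f s x₀
          rw [hsg]; ring_nf
      calc volume {s | s ∈ A ∧ S.f s x₀ ∈ U x} ≤ volume (Icc (a - T x) (a + T x)) :=
            measure_mono hsub
        _ = ENNReal.ofReal (2 * T x) := by rw [Real.volume_Icc]; ring_nf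
  have hbound : volume A ≤ ENNReal.ofReal (2 * Tm) := by
    calc volume A ≤ volume (⋃ x ∈ t, {s | s ∈ A ∧ S.f s x₀ ∈ U x}) := measure_mono hAsub
      _ ≤ ∑ x ∈ t, volume {s | s ∈ A ∧ S.f s x₀ ∈ U x} := measure_biUnion_finset_le t _
      _ ≤ ∑ x ∈ t, ENNReal.ofReal (2 * T x) := Finset.sum_le_sum hBx
      _ = ENNReal.ofReal (∑ x ∈ t, 2 * T x) :=
            (ENNReal.ofReal_sum_of_nonneg (fun x hx => by linarith [hTnonneg x hx])).symm
      _ ≤ ENNReal.ofReal (2 * Tm) := by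
            apply ENNReal.ofReal_le_ofReal
            rw [← Finset.mul_sum]
            simp only [hTm]; linarith
  have : ENNReal.ofReal (2 * Tm) < ENNReal.ofReal (2 * Tm) :=
    lt_of_lt_of_le hx₀ hbound
  exact lt_irrefl _ this
end

section
/- Let f be a semiflow on a compact metric space X, and suppose there exists a closed invariant set W ⊆ X which is isolated (there is λ > 0 such that every y ∈ ω_f with dist(y,W) < λ belongs to W) and not Lyapunov stable. Then f possesses η₃-slow relaxations: for some ε > 0 the function x ↦ η₃(x,ε) = inf{t ≥ 0 : dist(f(t',x), ω_f) < ε for all t' > t} is unbounded above on X. -/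
open Filter Topology Metric Set MeasureTheory
open scoped ENNReal

namespace Semiflow

variable {X : Type*} [MetricSpace X] (S : Semiflow X)

/-- `η₃(x,ε)`: time of the final entry into the `ε`-neighbourhood of `ω_f`. -/
noncomputable def eta3 (x : X) (ε : ℝ) : ℝ :=
  sInf {t : ℝ | 0 ≤ t ∧ ∀ t' > t, infDist (S.f t' x) S.omegaF < ε}

/-- The semiflow possesses η₃-slow relaxations. -/
def SlowEta3 : Prop := ∃ ε > (0:ℝ), ∀ T > (0:ℝ), ∃ x, S.eta3 x ε > T

/-- `W` is an invariant set: each of its points lies on a whole trajectory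
contained in `W`. -/
def IsInvariantSet (W : Set X) : Prop :=
  ∀ x ∈ W, ∃ φ : ℝ → X, φ 0 = x ∧ (∀ s t : ℝ, 0 ≤ t → S.f t (φ s) = φ (s + t)) ∧
    range φ ⊆ W

/-- `W` is Lyapunov stable. -/
def LyapunovStable (W : Set X) : Prop :=
  ∀ ε > (0:ℝ), ∃ δ > (0:ℝ), ∀ x : X, infDist x W < δ →
    ∀ t : ℝ, 0 ≤ t → infDist (S.f t x) W < ε

end Semiflow

section Aux

open Filter Topology Metric Set

variable {X : Type*} [MetricSpace X]

lemma Semiflow.omega_nonempty [CompactSpace X] (S : Semiflow X) (x : X) :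
    (S.omega x).Nonempty := by
  obtain ⟨y, -, φ, hφ, hconv⟩ := isCompact_univ.tendsto_subseq
    (fun n : ℕ => mem_univ (S.f n x))
  refine ⟨y, fun n => ((φ n : ℕ) : ℝ), fun n => Nat.cast_nonneg _, ?_, hconv⟩
  exact tendsto_natCast_atTop_atTop.comp hφ.tendsto_atTop

lemma Semiflow.omegaF_nonempty [CompactSpace X] (S : Semiflow X) (x : X) :
    S.omegaF.Nonempty := by
  obtain ⟨y, hy⟩ := S.omega_nonempty x
  exact ⟨y, Set.mem_iUnion.2 ⟨x, hy⟩⟩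

lemma Semiflow.settle [CompactSpace X] (S : Semiflow X) (x : X) {ε : ℝ} (hε : 0 < ε) :
    ∃ t : ℝ, 0 ≤ t ∧ ∀ t' > t, infDist (S.f t' x) S.omegaF < ε := by
  by_contra hcon
  push_neg at hcon
  choose u hu1 hu2 using fun n : ℕ => hcon n (Nat.cast_nonneg n)
  obtain ⟨y, -, φ, hφ, hconv⟩ := isCompact_univ.tendsto_subseq
    (fun n : ℕ => mem_univ (S.f (u n) x))
  have hle : ∀ n : ℕ, (n : ℝ) ≤ u (φ n) := fun n =>
    le_trans (Nat.cast_le.2 hφ.le_apply) (le_of_lt (hu1 (φ n)))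
  have hyω : y ∈ S.omegaF := by
    refine Set.mem_iUnion.2 ⟨x, u ∘ φ, fun n => le_trans (Nat.cast_nonneg n) (hle n), ?_, hconv⟩
    exact tendsto_atTop_mono hle tendsto_natCast_atTop_atTop
  have h0 : Tendsto (fun n => infDist (S.f (u (φ n)) x) S.omegaF) atTop (𝓝 0) := by
    have := ((continuous_infDist_pt S.omegaF).tendsto y).comp hconv
    rwa [infDist_zero_of_mem hyω] at this
  have : ε ≤ 0 := ge_of_tendsto h0 (Eventually.of_forall fun n => hu2 (φ n))
  linarith

lemma Semiflow.fwd_invariant (S : Semiflow X) {W : Set X}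
    (hW : S.IsInvariantSet W) {w : X} (hw : w ∈ W) {t : ℝ} (ht : 0 ≤ t) :
    S.f t w ∈ W := by
  obtain ⟨φ, h0, hsemi, hran⟩ := hW w hw
  have h := hsemi 0 t ht
  rw [h0] at h
  rw [h]
  exact hran ⟨0 + t, rfl⟩

end Aux

/-- Theorem 3.2: if there exists a closed invariant isolated and not Lyapunov stable
set `W ⊆ X`, then the semiflow possesses η₃-slow relaxations. -/
theorem isolated_unstable_slowEta3 {X : Type*} [MetricSpace X] [CompactSpace X]
    (S : Semiflow X)
    (h : ∃ W : Set X, IsClosed W ∧ S.IsInvariantSet W ∧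
      (∃ lam > (0:ℝ), ∀ y ∈ S.omegaF, infDist y W < lam → y ∈ W) ∧
      ¬ S.LyapunovStable W) :
    S.SlowEta3 := by
  obtain ⟨W, hWcl, hWinv, ⟨lam, hlam, hiso⟩, hnstab⟩ := h
  -- W is nonempty
  have hWne : W.Nonempty := by
    rcases W.eq_empty_or_nonempty with hE | hne
    · exfalso; apply hnstab
      intro ε hε
      exact ⟨1, one_pos, fun x _ t _ => by simp [hE, infDist_empty, hε]⟩
    · exact hne
  -- unfold instability
  rw [Semiflow.LyapunovStable] at hnstab
  push_neg at hnstab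
  obtain ⟨ε₀, hε₀, hinst⟩ := hnstab
  set ε : ℝ := min ε₀ lam / 4 with hεdef
  have hε : 0 < ε := by positivity
  have hε4a : 4 * ε ≤ ε₀ := by
    have := min_le_left ε₀ lam; rw [hεdef]; linarith
  have hε4b : 4 * ε ≤ lam := by
    have := min_le_right ε₀ lam; rw [hεdef]; linarith
  refine ⟨ε, hε, fun T hT => ?_⟩
  -- uniform continuity on [0,T] × X
  have hKcomp : IsCompact ((Set.Icc (0:ℝ) T) ×ˢ (Set.univ : Set X)) :=
    (isCompact_Icc).prod isCompact_univ
  have hKcont : ContinuousOn (fun p : ℝ × X => S.f p.1 p.2)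
      ((Set.Icc (0:ℝ) T) ×ˢ (Set.univ : Set X)) :=
    S.cont.mono (fun p hp => hp.1.1)
  have hUC := hKcomp.uniformContinuousOn_of_continuous hKcont
  rw [Metric.uniformContinuousOn_iff] at hUC
  obtain ⟨δ, hδ, hδUC⟩ := hUC ε hε
  -- instability at level δ
  obtain ⟨x, hxW, τ, hτ0, hτfar⟩ := hinst (min δ ε) (lt_min hδ hε)
  obtain ⟨w, hwW, hxw⟩ := (infDist_lt_iff hWne).1 hxW
  -- on [0,T], the trajectory stays ε-close to W
  have hnear : ∀ t ∈ Set.Icc (0:ℝ) T, infDist (S.f t x) W < ε := by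
    intro t ht
    have hd : dist ((t, x) : ℝ × X) (t, w) < δ := by
      rw [Prod.dist_eq]
      simp only [dist_self]
      exact max_lt hδ (lt_of_lt_of_le hxw (min_le_left _ _))
    have := hδUC (t, x) ⟨ht, Set.mem_univ _⟩ (t, w) ⟨ht, Set.mem_univ _⟩ hd
    calc infDist (S.f t x) W ≤ dist (S.f t x) (S.f t w) :=
          infDist_le_dist_of_mem (S.fwd_invariant hWinv hwW ht.1)
      _ < ε := this
  -- τ > T
  have hτT : T < τ := by
    by_contra hc
    push_neg at hc
    have := hnear τ ⟨hτ0, hc⟩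
    linarith [hτfar, hε4a]
  -- IVT on [T, τ] for g t = infDist (f t x) W
  have htraj : ContinuousOn (fun t : ℝ => S.f t x) (Set.Icc T τ) := by
    have h1 : ContinuousOn (fun t : ℝ => ((t, x) : ℝ × X)) (Set.Icc T τ) :=
      (continuous_id.prodMk continuous_const).continuousOn
    exact S.cont.comp h1 (fun t ht => le_trans (le_of_lt hT) ht.1)
  have hgcont : ContinuousOn (fun t => infDist (S.f t x) W) (Set.Icc T τ) :=
    (continuous_infDist_pt W).comp_continuousOn htraj
  have hmem : (2 * ε) ∈ Set.Icc (infDist (S.f T x) W) (infDist (S.f τ x) W) := by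
    constructor
    · have := hnear T ⟨le_of_lt hT, le_refl T⟩; linarith
    · linarith [hτfar, hε4a]
  obtain ⟨t₀, ht₀mem, ht₀⟩ := intermediate_value_Icc (le_of_lt hτT) hgcont hmem
  have ht₀' : infDist (S.f t₀ x) W = 2 * ε := ht₀
  have ht₀T : T < t₀ := by
    rcases lt_or_eq_of_le ht₀mem.1 with h | h
    · exact h
    · exfalso
      have hh := hnear T ⟨le_of_lt hT, le_refl T⟩
      rw [← h] at ht₀'; linarith
  -- at time t₀, the point is ε-far from ω_f
  have hfar : ε ≤ infDist (S.f t₀ x) S.omegaF := by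
    by_contra hc
    push_neg at hc
    obtain ⟨y, hyω, hyd⟩ := (infDist_lt_iff (S.omegaF_nonempty x)).1 hc
    by_cases hyW : infDist y W < lam
    · have hyWmem : y ∈ W := hiso y hyω hyW
      have : infDist (S.f t₀ x) W ≤ dist (S.f t₀ x) y := infDist_le_dist_of_mem hyWmem
      linarith
    · push_neg at hyW
      have htri : infDist y W ≤ infDist (S.f t₀ x) W + dist y (S.f t₀ x) :=
        infDist_le_infDist_add_dist
      rw [dist_comm] at htri
      linarith
  -- conclude
  refine ⟨x, ?_⟩
  rw [Semiflow.eta3]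
  obtain ⟨s₀, hs₀0, hs₀⟩ := S.settle x hε
  have hlb : ∀ s ∈ {t : ℝ | 0 ≤ t ∧ ∀ t' > t, infDist (S.f t' x) S.omegaF < ε}, t₀ ≤ s := by
    intro s hs
    by_contra hc
    push_neg at hc
    have := hs.2 t₀ hc
    linarith
  have : t₀ ≤ sInf {t : ℝ | 0 ≤ t ∧ ∀ t' > t, infDist (S.f t' x) S.omegaF < ε} :=
    le_csInf ⟨s₀, hs₀0, hs₀⟩ hlb
  linarith
end

section
/- Let f be a semiflow on a compact connected metric space X such that the closure of ω_f is a disconnected set. Then f possesses η₃-slow relaxations and τ₁-, τ₂-, τ₃-slow relaxations. -/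
open Filter Topology Metric Set MeasureTheory
open scoped ENNReal

namespace Semiflow

variable {X : Type*} [MetricSpace X] (S : Semiflow X)

/-- `τ₁(x,ε)`: time of the first entry into the `ε`-neighbourhood of `ω(x)`. -/
noncomputable def tau1 (x : X) (ε : ℝ) : ℝ :=
  sInf {t : ℝ | 0 ≤ t ∧ infDist (S.f t x) (S.omega x) < ε}

/-- The semiflow possesses τ₁-slow relaxations. -/
def SlowTau1 : Prop := ∃ ε > (0:ℝ), ∀ T > (0:ℝ), ∃ x, S.tau1 x ε > T

/-- `τ₂(x,ε)`: Lebesgue measure of the set of times spent outside the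
`ε`-neighbourhood of `ω(x)`. -/
noncomputable def tau2 (x : X) (ε : ℝ) : ℝ≥0∞ :=
  volume {t : ℝ | 0 ≤ t ∧ ε ≤ infDist (S.f t x) (S.omega x)}

/-- The semiflow possesses τ₂-slow relaxations. -/
def SlowTau2 : Prop := ∃ ε > (0:ℝ), ∀ T > (0:ℝ), ∃ x, ENNReal.ofReal T < S.tau2 x ε

/-- `τ₃(x,ε)`: time of the final entry into the `ε`-neighbourhood of `ω(x)`. -/
noncomputable def tau3 (x : X) (ε : ℝ) : ℝ :=
  sInf {t : ℝ | 0 ≤ t ∧ ∀ t' > t, infDist (S.f t' x) (S.omega x) < ε}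

/-- The semiflow possesses τ₃-slow relaxations. -/
def SlowTau3 : Prop := ∃ ε > (0:ℝ), ∀ T > (0:ℝ), ∃ x, S.tau3 x ε > T

end Semiflow

namespace Semiflow

variable {X : Type*} [MetricSpace X] (S : Semiflow X)

lemma omega_subset_omegaF (x : X) : S.omega x ⊆ S.omegaF :=
  subset_iUnion (fun x => S.omega x) x

lemma cont_fixed (t : ℝ) (ht : 0 ≤ t) : Continuous (fun x => S.f t x) :=
  S.cont.comp_continuous (continuous_const.prodMk continuous_id) (fun _ => ht)

lemma cont_traj (x : X) : ContinuousOn (fun t => S.f t x) (Ici 0) :=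
  S.cont.comp ((continuous_id.prodMk continuous_const).continuousOn)
    (fun t (ht : t ∈ Ici (0:ℝ)) => ht)

variable [CompactSpace X]

lemma omega_nonempty_s11 (x : X) : (S.omega x).Nonempty := by
  obtain ⟨y, -, φ, hφ, hconv⟩ :=
    isCompact_univ.tendsto_subseq (x := fun n : ℕ => S.f n x) (fun n => mem_univ _)
  refine ⟨y, fun n => (φ n : ℝ), fun n => Nat.cast_nonneg _, ?_, hconv⟩
  exact tendsto_natCast_atTop_atTop.comp hφ.tendsto_atTop

/-- Eventually the trajectory is `ε`-close to any set `Ω` containing `ω(x)`. -/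
lemma eventually_close (x : X) {Ω : Set X} (hΩ : S.omega x ⊆ Ω) {ε : ℝ} (hε : 0 < ε) :
    ∃ t₀ : ℝ, 0 ≤ t₀ ∧ ∀ t > t₀, infDist (S.f t x) Ω < ε := by
  by_contra hcon
  push_neg at hcon
  have h' : ∀ n : ℕ, ∃ s : ℝ, s > (n:ℝ) ∧ ε ≤ infDist (S.f s x) Ω := by
    intro n
    obtain ⟨s, hs1, hs2⟩ := hcon (n : ℝ) (Nat.cast_nonneg n)
    exact ⟨s, hs1, hs2⟩
  choose u hu hd using h'
  obtain ⟨y, -, φ, hφ, hconv⟩ :=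
    isCompact_univ.tendsto_subseq (x := fun n : ℕ => S.f (u n) x) (fun n => mem_univ _)
  have hyω : y ∈ S.omega x := by
    refine ⟨fun n => u (φ n), fun n => le_trans (Nat.cast_nonneg _) (le_of_lt (hu (φ n))), ?_, hconv⟩
    refine tendsto_atTop_mono (fun n => ?_) (tendsto_natCast_atTop_atTop.comp hφ.tendsto_atTop)
    exact le_of_lt (hu (φ n))
  have hlim : Tendsto (fun n => infDist (S.f (u (φ n)) x) Ω) atTop (𝓝 (infDist y Ω)) :=
    ((continuous_infDist_pt Ω).tendsto y).comp hconv
  have : ε ≤ infDist y Ω := ge_of_tendsto hlim (Eventually.of_forall fun n => hd (φ n))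
  rw [infDist_zero_of_mem (hΩ hyω)] at this
  exact absurd this (not_le.mpr hε)

lemma omega_shift (x : X) {s : ℝ} (hs : 0 ≤ s) : S.omega (S.f s x) = S.omega x := by
  ext y
  constructor
  · rintro ⟨t, htn, hta, htc⟩
    refine ⟨fun n => t n + s, fun n => add_nonneg (htn n) hs,
      tendsto_atTop_add_const_right _ s hta, ?_⟩
    refine htc.congr fun n => ?_
    exact S.semigroup (t n) s (htn n) hs x
  · rintro ⟨t, htn, hta, htc⟩
    obtain ⟨N, hN⟩ := (hta.eventually_ge_atTop s).exists_forall_of_atTop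
    have hN' : ∀ n : ℕ, s ≤ t (n + N) := fun n => hN (n + N) (Nat.le_add_left _ _)
    refine ⟨fun n => t (n + N) - s, fun n => sub_nonneg.mpr (hN' n), ?_, ?_⟩
    · have : Tendsto (fun n => t (n + N)) atTop atTop := hta.comp (tendsto_add_atTop_nat N)
      simpa [sub_eq_add_neg] using tendsto_atTop_add_const_right atTop (-s) this
    · have h1 : Tendsto (fun n => S.f (t (n + N)) x) atTop (𝓝 y) :=
        htc.comp (tendsto_add_atTop_nat N)
      refine h1.congr fun n => ?_
      rw [S.semigroup _ s (sub_nonneg.mpr (hN' n)) hs x, sub_add_cancel]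

/-- If the ω-limit sets all lie in `A ∪ B` with `δ`-thickenings of `A` and `B`
disjoint, then each `ω(x)` lies entirely in `A` or entirely in `B`. -/
lemma omega_dichotomy {A B : Set X} {δ : ℝ} (hδ : 0 < δ)
    (hdisj : Disjoint (thickening δ A) (thickening δ B))
    (hAne : A.Nonempty) (hsub : S.omegaF ⊆ A ∪ B) (x : X) :
    S.omega x ⊆ A ∨ S.omega x ⊆ B := by
  by_contra hcon
  push_neg at hcon
  obtain ⟨hnA, hnB⟩ := hcon
  obtain ⟨p, hpω, hpA⟩ := Set.not_subset.mp fun h => hnA h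
  obtain ⟨q, hqω, hqB⟩ := Set.not_subset.mp fun h => hnB h
  -- p ∈ ω(x) \ A so p ∈ B; q ∈ ω(x) \ B so q ∈ A
  have hpB : p ∈ B := ((hsub (S.omega_subset_omegaF x hpω)).resolve_left hpA)
  have hqA : q ∈ A := ((hsub (S.omega_subset_omegaF x hqω)).resolve_right hqB)
  obtain ⟨sq, hsqn, hsqa, hsqc⟩ := hqω
  obtain ⟨sp, hspn, hspa, hspc⟩ := hpω
  -- infDist(f(sq n) x, A) → 0 ; infDist(f(sp n) x, A) → infDist p A ≥ δ
  have hql : Tendsto (fun n => infDist (S.f (sq n) x) A) atTop (𝓝 0) := by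
    have := ((continuous_infDist_pt A).tendsto q).comp hsqc
    rwa [infDist_zero_of_mem hqA] at this
  have hpdA : δ ≤ infDist p A := by
    by_contra hlt
    push_neg at hlt
    exact (disjoint_left.mp hdisj ((mem_thickening_iff_infDist_lt hAne).mpr hlt)
      (self_subset_thickening hδ B hpB)).elim
  have hpl : Tendsto (fun n => infDist (S.f (sp n) x) A) atTop (𝓝 (infDist p A)) :=
    ((continuous_infDist_pt A).tendsto p).comp hspc
  -- crossing times: for each n, find v > n with infDist (f v x) A = δ/2
  have hcross : ∀ n : ℕ, ∃ v : ℝ, v > (n:ℝ) ∧ infDist (S.f v x) A = δ/2 := by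
    intro n
    have h1 : ∀ᶠ m in atTop, infDist (S.f (sq m) x) A < δ/2 :=
      hql.eventually (eventually_lt_nhds (by positivity : (0:ℝ) < δ/2)) |>.mono
        (fun m hm => by simpa using hm)
    have h2 : ∀ᶠ m in atTop, (n:ℝ) < sq m := hsqa.eventually_gt_atTop _
    obtain ⟨m, hm1, hm2⟩ := (h1.and h2).exists
    -- now a later time with infDist > δ/2
    have h3 : ∀ᶠ k in atTop, δ/2 < infDist (S.f (sp k) x) A := by
      refine hpl.eventually (eventually_gt_nhds ?_)
      linarith
    have h4 : ∀ᶠ k in atTop, sq m < sp k := hspa.eventually_gt_atTop _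
    obtain ⟨k, hk1, hk2⟩ := (h3.and h4).exists
    have hsqm0 : (0:ℝ) ≤ sq m := hsqn m
    have hIVT := intermediate_value_Icc (le_of_lt hk2)
      (((continuous_infDist_pt A).comp_continuousOn
        ((S.cont_traj x).mono (fun t ht => le_trans hsqm0 ht.1))) :
        ContinuousOn (fun t => infDist (S.f t x) A) (Icc (sq m) (sp k)))
    have hmem : δ/2 ∈ Icc (infDist (S.f (sq m) x) A) (infDist (S.f (sp k) x) A) :=
      ⟨le_of_lt hm1, le_of_lt hk1⟩
    obtain ⟨v, hv, hveq⟩ := hIVT hmem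
    exact ⟨v, lt_of_lt_of_le hm2 hv.1, hveq⟩
  choose v hv hveq using hcross
  obtain ⟨y, -, φ, hφ, hconv⟩ :=
    isCompact_univ.tendsto_subseq (x := fun n : ℕ => S.f (v n) x) (fun n => mem_univ _)
  have hyω : y ∈ S.omega x := by
    refine ⟨fun n => v (φ n), fun n => le_trans (Nat.cast_nonneg _) (le_of_lt (hv (φ n))), ?_, hconv⟩
    exact tendsto_atTop_mono (fun n => le_of_lt (hv (φ n)))
      (tendsto_natCast_atTop_atTop.comp hφ.tendsto_atTop)
  have hyd : infDist y A = δ/2 := by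
    have hlim : Tendsto (fun n => infDist (S.f (v (φ n)) x) A) atTop (𝓝 (infDist y A)) :=
      ((continuous_infDist_pt A).tendsto y).comp hconv
    have hlim' : Tendsto (fun n => infDist (S.f (v (φ n)) x) A) atTop (𝓝 (δ/2)) := by
      refine tendsto_const_nhds.congr fun n => (hveq (φ n)).symm
    exact tendsto_nhds_unique hlim hlim'
  rcases hsub (S.omega_subset_omegaF x hyω) with hyA | hyB
  · rw [infDist_zero_of_mem hyA] at hyd; linarith
  · have : δ ≤ infDist y A := by
      by_contra hlt
      push_neg at hlt
      exact (disjoint_left.mp hdisj ((mem_thickening_iff_infDist_lt hAne).mpr hlt)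
        (self_subset_thickening hδ B hyB)).elim
    linarith

/-- Key construction: a boundary point between the basins of `A` and `B` yields,
for each `T`, a point whose trajectory stays `δ`-far from its own ω-limit set
during the whole time interval `[0, T+1]`. -/
lemma avoid {A B : Set X} {δ : ℝ} (hδ : 0 < δ)
    (hdisj : Disjoint (thickening δ A) (thickening δ B))
    (hAne : A.Nonempty) (hBne : B.Nonempty)
    {x₀ : X} (hxA : S.omega x₀ ⊆ A) (hx₀ : x₀ ∈ closure {z | S.omega z ⊆ B})
    (T : ℝ) (hT : 0 < T) :
    ∃ y, ∀ t ∈ Icc (0:ℝ) (T+1), δ ≤ infDist (S.f t y) (S.omega y) := by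
  obtain ⟨t₀, ht₀, ht₀cl⟩ := S.eventually_close x₀ hxA (by positivity : (0:ℝ) < δ/2)
  -- uniform continuity on Icc 0 (t₀+T+2) × X
  set Tend : ℝ := t₀ + T + 2 with hTend
  have hKcomp : IsCompact (Icc (0:ℝ) Tend ×ˢ (univ : Set X)) :=
    isCompact_Icc.prod isCompact_univ
  have hFcont : ContinuousOn (fun p : ℝ × X => S.f p.1 p.2) (Icc (0:ℝ) Tend ×ˢ univ) :=
    S.cont.mono (fun p hp => hp.1.1)
  obtain ⟨ρ, hρ, hρ'⟩ := Metric.uniformContinuousOn_iff.mp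
    (hKcomp.uniformContinuousOn_of_continuous hFcont) (δ/2) (by positivity)
  obtain ⟨z, hzB, hzd⟩ := Metric.mem_closure_iff.mp hx₀ ρ hρ
  have hzω : S.omega z ⊆ B := hzB
  have hzne : (S.omega z).Nonempty := S.omega_nonempty_s11 z
  -- for t ∈ (t₀, Tend], f t z is within δ of A hence δ-far from B
  have hkey : ∀ t, t₀ < t → t ≤ Tend → δ ≤ infDist (S.f t z) (S.omega z) := by
    intro t htl htu
    have ht0 : (0:ℝ) ≤ t := le_trans ht₀ (le_of_lt htl)
    have hmem1 : ((t, z) : ℝ × X) ∈ Icc (0:ℝ) Tend ×ˢ (univ : Set X) :=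
      ⟨⟨ht0, htu⟩, mem_univ _⟩
    have hmem2 : ((t, x₀) : ℝ × X) ∈ Icc (0:ℝ) Tend ×ˢ (univ : Set X) :=
      ⟨⟨ht0, htu⟩, mem_univ _⟩
    have hdd : dist ((t, z) : ℝ × X) (t, x₀) < ρ := by
      rw [Prod.dist_eq]
      simp only [dist_self]
      rw [max_lt_iff]
      exact ⟨hρ, by rwa [dist_comm] at hzd⟩
    have h1 : dist (S.f t z) (S.f t x₀) < δ/2 := hρ' _ hmem1 _ hmem2 hdd
    have h2 : infDist (S.f t x₀) A < δ/2 := ht₀cl t htl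
    have h3 : infDist (S.f t z) A < δ := by
      calc infDist (S.f t z) A ≤ infDist (S.f t x₀) A + dist (S.f t z) (S.f t x₀) :=
            infDist_le_infDist_add_dist
        _ < δ/2 + δ/2 := by linarith
        _ = δ := by ring
    have h4 : S.f t z ∉ thickening δ B :=
      disjoint_left.mp hdisj ((mem_thickening_iff_infDist_lt hAne).mpr h3)
    have h5 : δ ≤ infDist (S.f t z) B := by
      by_contra hlt
      push_neg at hlt
      exact h4 ((mem_thickening_iff_infDist_lt hBne).mpr hlt)
    exact le_trans h5 (infDist_le_infDist_of_subset hzω hzne)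
  refine ⟨S.f (t₀+1) z, fun t ht => ?_⟩
  have hsh : S.omega (S.f (t₀+1) z) = S.omega z := S.omega_shift z (by linarith)
  have hfe : S.f t (S.f (t₀+1) z) = S.f (t + (t₀+1)) z :=
    S.semigroup t (t₀+1) ht.1 (by linarith) z
  rw [hsh, hfe]
  exact hkey (t + (t₀+1)) (by linarith [ht.1]) (by simp only [hTend]; linarith [ht.2])

/-- From the avoidance property, the three τ-slow-relaxation properties. -/
lemma slow_of_avoid {δ : ℝ} (hδ : 0 < δ)
    (hav : ∀ T > (0:ℝ), ∃ y, ∀ t ∈ Icc (0:ℝ) (T+1), δ ≤ infDist (S.f t y) (S.omega y)) :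
    S.SlowTau1 ∧ S.SlowTau2 ∧ S.SlowTau3 := by
  refine ⟨⟨δ, hδ, ?_⟩, ⟨δ, hδ, ?_⟩, ⟨δ, hδ, ?_⟩⟩
  · -- τ₁
    intro T hT
    obtain ⟨y, hy⟩ := hav T hT
    obtain ⟨t₁, ht₁, ht₁cl⟩ := S.eventually_close y (subset_refl (S.omega y)) hδ
    refine ⟨y, lt_of_lt_of_le (by linarith : T < T+1) (le_csInf ⟨t₁+1, by linarith, ht₁cl _ (by linarith)⟩ ?_)⟩
    rintro s ⟨hs0, hscl⟩
    by_contra hlt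
    push_neg at hlt
    exact absurd (hy s ⟨hs0, le_of_lt hlt⟩) (not_le.mpr hscl)
  · -- τ₂
    intro T hT
    obtain ⟨y, hy⟩ := hav T hT
    refine ⟨y, lt_of_lt_of_le ?_ (measure_mono (s := Icc (0:ℝ) (T+1)) (fun t ht => ⟨ht.1, hy t ht⟩))⟩
    rw [Real.volume_Icc]
    rw [ENNReal.ofReal_lt_ofReal_iff (by linarith)]
    linarith
  · -- τ₃
    intro T hT
    obtain ⟨y, hy⟩ := hav T hT
    obtain ⟨t₁, ht₁, ht₁cl⟩ := S.eventually_close y (subset_refl (S.omega y)) hδ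
    refine ⟨y, lt_of_lt_of_le (by linarith : T < T+1) (le_csInf ⟨t₁, ht₁, fun t' ht' => ht₁cl t' ht'⟩ ?_)⟩
    rintro s ⟨hs0, hscl⟩
    by_contra hlt
    push_neg at hlt
    exact absurd (hscl (T+1) hlt) (not_lt.mpr (hy (T+1) ⟨by linarith, le_refl _⟩))

/-- The η₃-slow relaxation property from a disconnection of `closure ω_f`. -/
lemma slow_eta3 [ConnectedSpace X] {A B : Set X} {δ : ℝ} (hδ : 0 < δ)
    (hdisj : Disjoint (thickening δ A) (thickening δ B))
    (hAne : (S.omegaF ∩ A).Nonempty) (hBne : (S.omegaF ∩ B).Nonempty)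
    (hsub : S.omegaF ⊆ A ∪ B) : S.SlowEta3 := by
  have hA' : A.Nonempty := ⟨hAne.choose, hAne.choose_spec.2⟩
  have hB' : B.Nonempty := ⟨hBne.choose, hBne.choose_spec.2⟩
  have hωFne : S.omegaF.Nonempty := ⟨hAne.choose, hAne.choose_spec.1⟩
  refine ⟨δ/2, by positivity, fun T hT => ?_⟩
  by_contra hcon
  push_neg at hcon
  have hmain : ∀ x : X, infDist (S.f (T+1) x) S.omegaF < δ/2 := by
    intro x
    obtain ⟨t₀, ht₀, htcl⟩ := S.eventually_close x (S.omega_subset_omegaF x) (half_pos hδ)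
    have hne : {t : ℝ | 0 ≤ t ∧ ∀ t' > t, infDist (S.f t' x) S.omegaF < δ/2}.Nonempty :=
      ⟨t₀, ht₀, htcl⟩
    have hbdd : BddBelow {t : ℝ | 0 ≤ t ∧ ∀ t' > t, infDist (S.f t' x) S.omegaF < δ/2} :=
      ⟨0, fun s hs => hs.1⟩
    have hlt : S.eta3 x (δ/2) < T+1 := lt_of_le_of_lt (hcon x) (by linarith)
    obtain ⟨s, hs, hsl⟩ := (csInf_lt_iff hbdd hne).mp hlt
    exact hs.2 (T+1) hsl
  have hg : Continuous (fun x : X => S.f (T+1) x) := S.cont_fixed (T+1) (by linarith)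
  have hconn : IsPreconnected (range (fun x : X => S.f (T+1) x)) := isPreconnected_range hg
  have hsubr : range (fun x : X => S.f (T+1) x) ⊆
      thickening (δ/2) A ∪ thickening (δ/2) B := by
    rintro w ⟨x, rfl⟩
    have h1 : infDist (S.f (T+1) x) (A ∪ B) < δ/2 :=
      lt_of_le_of_lt (infDist_le_infDist_of_subset hsub hωFne) (hmain x)
    have h2 : S.f (T+1) x ∈ thickening (δ/2) (A ∪ B) :=
      (mem_thickening_iff_infDist_lt (hA'.mono subset_union_left)).mpr h1
    rwa [thickening_union] at h2
  have hdisj' : Disjoint (thickening (δ/2) A) (thickening (δ/2) B) :=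
    hdisj.mono (thickening_mono (by linarith) A) (thickening_mono (by linarith) B)
  have hlimc : ∀ C : Set X, C.Nonempty → (∀ x : X, S.f (T+1) x ∈ thickening (δ/2) C) →
      ∀ c ∈ S.omegaF, infDist c C ≤ δ/2 := by
    intro C hCne hC c hc
    obtain ⟨y, hyc⟩ := mem_iUnion.mp hc
    obtain ⟨t, htn, hta, htc⟩ := hyc
    have hev : ∀ᶠ n in atTop, T+1 ≤ t n := hta.eventually_ge_atTop _
    have hlim : Tendsto (fun n => infDist (S.f (t n) y) C) atTop (𝓝 (infDist c C)) :=
      ((continuous_infDist_pt C).tendsto c).comp htc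
    refine le_of_tendsto hlim (hev.mono fun n hn => ?_)
    have hmem : S.f (t n) y ∈ thickening (δ/2) C := by
      have heq : S.f (t n) y = S.f (T+1) (S.f (t n - (T+1)) y) := by
        rw [S.semigroup (T+1) (t n - (T+1)) (by linarith) (by linarith)]
        congr 1
        ring
      rw [heq]
      exact hC _
    exact le_of_lt ((mem_thickening_iff_infDist_lt hCne).mp hmem)
  rcases hconn.subset_or_subset isOpen_thickening isOpen_thickening hdisj' hsubr with hca | hcb
  · obtain ⟨b, hbω, hbB⟩ := hBne
    have h1 : infDist b A ≤ δ/2 :=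
      hlimc A hA' (fun x => hca (mem_range_self x)) b hbω
    have h2 : b ∈ thickening δ A :=
      (mem_thickening_iff_infDist_lt hA').mpr (lt_of_le_of_lt h1 (by linarith))
    exact disjoint_left.mp hdisj h2 (self_subset_thickening hδ B hbB)
  · obtain ⟨a, haω, haA⟩ := hAne
    have h1 : infDist a B ≤ δ/2 :=
      hlimc B hB' (fun x => hcb (mem_range_self x)) a haω
    have h2 : a ∈ thickening δ B :=
      (mem_thickening_iff_infDist_lt hB').mpr (lt_of_le_of_lt h1 (by linarith))
    exact disjoint_left.mp hdisj (self_subset_thickening hδ A haA) h2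

end Semiflow

/-- Theorem 3.3: if `X` is connected and the closure of `ω_f` is disconnected,
then the semiflow possesses η₃- and τ₁-, τ₂-, τ₃-slow relaxations. -/
theorem disconnected_closure_omegaF_slow {X : Type*} [MetricSpace X] [CompactSpace X]
    [ConnectedSpace X] (S : Semiflow X)
    (h : ¬ IsPreconnected (closure S.omegaF)) :
    S.SlowEta3 ∧ S.SlowTau1 ∧ S.SlowTau2 ∧ S.SlowTau3 := by
  classical
  unfold IsPreconnected at h
  push_neg at h
  obtain ⟨u, v, hu, hv, hcover, hnu, hnv, hempty⟩ := h
  set s : Set X := closure S.omegaF with hsdef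
  set A : Set X := s ∩ vᶜ with hAdef
  set B : Set X := s ∩ uᶜ with hBdef
  have hscl : IsClosed s := isClosed_closure
  have hAcl : IsClosed A := hscl.inter (isClosed_compl_iff.mpr hv)
  have hBcl : IsClosed B := hscl.inter (isClosed_compl_iff.mpr hu)
  have hem : ∀ x, x ∉ s ∩ (u ∩ v) := eq_empty_iff_forall_notMem.mp hempty
  have hABs : A ∪ B = s := by
    apply subset_antisymm
    · exact union_subset inter_subset_left inter_subset_left
    · intro x hx
      rcases hcover hx with hxu | hxv
      · exact Or.inl ⟨hx, fun hxv => hem x ⟨hx, hxu, hxv⟩⟩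
      · exact Or.inr ⟨hx, fun hxu => hem x ⟨hx, hxu, hxv⟩⟩
  have hABdisj : Disjoint A B := by
    rw [disjoint_left]
    rintro x ⟨hxs, hxv⟩ ⟨-, hxu⟩
    rcases hcover hxs with h' | h'
    exacts [hxu h', hxv h']
  have hωA : (S.omegaF ∩ A).Nonempty := by
    obtain ⟨c, hcs, hcu⟩ := hnu
    obtain ⟨w, hwu, hwω⟩ := _root_.mem_closure_iff.mp hcs u hu hcu
    have hws : w ∈ s := subset_closure hwω
    exact ⟨w, hwω, hws, fun hwv => hem w ⟨hws, hwu, hwv⟩⟩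
  have hωB : (S.omegaF ∩ B).Nonempty := by
    obtain ⟨c, hcs, hcv⟩ := hnv
    obtain ⟨w, hwv, hwω⟩ := _root_.mem_closure_iff.mp hcs v hv hcv
    have hws : w ∈ s := subset_closure hwω
    exact ⟨w, hwω, hws, fun hwu => hem w ⟨hws, hwu, hwv⟩⟩
  obtain ⟨δ, hδ, hdisj⟩ := hABdisj.exists_thickenings hAcl.isCompact hBcl
  have hsub : S.omegaF ⊆ A ∪ B := hABs ▸ subset_closure
  have hA' : A.Nonempty := ⟨hωA.choose, hωA.choose_spec.2⟩
  have hB' : B.Nonempty := ⟨hωB.choose, hωB.choose_spec.2⟩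
  refine ⟨S.slow_eta3 hδ hdisj hωA hωB hsub, ?_⟩
  have hdich : ∀ x, S.omega x ⊆ A ∨ S.omega x ⊆ B :=
    fun x => S.omega_dichotomy hδ hdisj hA' hsub x
  set XA : Set X := {z : X | S.omega z ⊆ A} with hXAdef
  set XB : Set X := {z : X | S.omega z ⊆ B} with hXBdef
  have hXAne : XA.Nonempty := by
    obtain ⟨a, haω, haA⟩ := hωA
    obtain ⟨ya, hya⟩ := mem_iUnion.mp haω
    rcases hdich ya with hy | hy
    · exact ⟨ya, hy⟩
    · exact (disjoint_left.mp hABdisj haA (hy hya)).elim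
  have hXBne : XB.Nonempty := by
    obtain ⟨b, hbω, hbB⟩ := hωB
    obtain ⟨yb, hyb⟩ := mem_iUnion.mp hbω
    rcases hdich yb with hy | hy
    · exact (disjoint_left.mp hABdisj (hy hyb) hbB).elim
    · exact ⟨yb, hy⟩
  have hbd : (closure XA ∩ closure XB).Nonempty := by
    by_contra hc
    rw [Set.not_nonempty_iff_eq_empty] at hc
    have hcc : ∀ x : X, x ∉ closure XA ∩ closure XB := eq_empty_iff_forall_notMem.mp hc
    have hpc := (isPreconnected_univ (α := X)) (closure XB)ᶜ (closure XA)ᶜ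
      isClosed_closure.isOpen_compl isClosed_closure.isOpen_compl
      (fun x _ => by
        by_contra hx
        simp only [mem_union, mem_compl_iff, not_or, not_not] at hx
        exact hcc x ⟨hx.2, hx.1⟩)
      ⟨hXAne.choose, mem_univ _, fun hmem => hcc hXAne.choose ⟨subset_closure hXAne.choose_spec, hmem⟩⟩
      ⟨hXBne.choose, mem_univ _, fun hmem => hcc hXBne.choose ⟨hmem, subset_closure hXBne.choose_spec⟩⟩
    obtain ⟨x, -, hx1, hx2⟩ := hpc
    rcases hdich x with h' | h'
    exacts [hx2 (subset_closure h'), hx1 (subset_closure h')]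
  obtain ⟨x₀, hx₀A, hx₀B⟩ := hbd
  have hτ : ∀ T > (0:ℝ), ∃ y, ∀ t ∈ Icc (0:ℝ) (T+1), δ ≤ infDist (S.f t y) (S.omega y) := by
    intro T hT
    rcases hdich x₀ with hx | hx
    · exact S.avoid hδ hdisj hA' hB' hx hx₀B T hT
    · exact S.avoid hδ hdisj.symm hB' hA' hx hx₀A T hT
  exact S.slow_of_avoid hδ hτ
end

section
/- Let f be a semiflow on a compact connected metric space X such that the closure of ω_f is a disconnected set. Then the closure of ω_f is not Lyapunov stable. -/
open Filter Topology Metric Set MeasureTheory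
open scoped ENNReal

/-- Lemma 3.3: if `X` is connected and the closure of `ω_f` is disconnected, then
the closure of `ω_f` is not Lyapunov stable. -/
theorem disconnected_closure_omegaF_not_stable {X : Type*} [MetricSpace X]
    [CompactSpace X] [ConnectedSpace X] (S : Semiflow X)
    (h : ¬ IsPreconnected (closure S.omegaF)) :
    ¬ S.LyapunovStable (closure S.omegaF) := by
  intro hstab
  set W := closure S.omegaF with hWdef
  have hWclosed : IsClosed W := isClosed_closure
  rw [IsPreconnected] at h
  push_neg at h
  obtain ⟨U, V, hU, hV, hcov, hUne, hVne, hdisj⟩ := h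
  have hdisj' : W ∩ (U ∩ V) = ∅ := hdisj
  set A : Set X := W \ V with hAdef
  set B : Set X := W \ U with hBdef
  have hAB : A ∪ B = W := by
    ext x
    constructor
    · rintro (⟨hx, -⟩ | ⟨hx, -⟩) <;> exact hx
    · intro hx
      by_cases hxV : x ∈ V
      · refine Or.inr ⟨hx, fun hxU => ?_⟩
        have : x ∈ W ∩ (U ∩ V) := ⟨hx, hxU, hxV⟩
        simp [hdisj'] at this
      · exact Or.inl ⟨hx, hxV⟩
  have hAne : A.Nonempty := by
    obtain ⟨x, hxW, hxU⟩ := hUne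
    refine ⟨x, hxW, fun hxV => ?_⟩
    have : x ∈ W ∩ (U ∩ V) := ⟨hxW, hxU, hxV⟩
    simp [hdisj'] at this
  have hBne : B.Nonempty := by
    obtain ⟨x, hxW, hxV⟩ := hVne
    refine ⟨x, hxW, fun hxU => ?_⟩
    have : x ∈ W ∩ (U ∩ V) := ⟨hxW, hxU, hxV⟩
    simp [hdisj'] at this
  have hWne : W.Nonempty := hAB ▸ hAne.inl
  have hAclosed : IsClosed A := hWclosed.sdiff hV
  have hBclosed : IsClosed B := hWclosed.sdiff hU
  have hABdisj : ∀ x, x ∈ A → x ∈ B → False := by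
    rintro x ⟨hxW, hxV⟩ ⟨-, hxU⟩
    rcases hcov hxW with hx | hx
    · exact hxU hx
    · exact hxV hx
  -- positive distance between A and B
  obtain ⟨a0, ha0, ha0min⟩ :=
    hAclosed.isCompact.exists_isMinOn hAne
      ((continuous_infDist_pt B).continuousOn)
  have ha0min : ∀ a ∈ A, infDist a0 B ≤ infDist a B := fun a ha => ha0min ha
  set c : ℝ := infDist a0 B with hcdef
  have hcpos : 0 < c := by
    rw [hcdef, ← hBclosed.notMem_iff_infDist_pos hBne]
    exact fun hb => hABdisj a0 ha0 hb
  have hdistAB : ∀ a ∈ A, ∀ b ∈ B, c ≤ dist a b := fun a ha b hb =>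
    (ha0min a ha).trans (infDist_le_dist_of_mem hb)
  set ε : ℝ := c / 3 with hεdef
  have hεpos : 0 < ε := by positivity
  obtain ⟨δ₀, hδ₀pos, hδ₀⟩ := hstab ε hεpos
  set δ : ℝ := min δ₀ ε with hδdef
  have hδpos : 0 < δ := lt_min hδ₀pos hεpos
  have hδle : δ ≤ δ₀ := min_le_left _ _
  have hδleε : δ ≤ ε := min_le_right _ _
  -- key: once δ-close to P, stays ε-close to P forever
  have key : ∀ P Q : Set X, P ∪ Q = W → P.Nonempty →
      (∀ p ∈ P, ∀ q ∈ Q, c ≤ dist p q) →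
      ∀ x : X, ∀ t0 : ℝ, 0 ≤ t0 → infDist (S.f t0 x) P < δ →
      ∀ t : ℝ, t0 ≤ t → infDist (S.f t x) P < ε := by
    intro P Q hPQ hPne hd x t0 ht0 hstart t ht
    have hcontx : ContinuousOn (fun s : ℝ => S.f s x) (Ici (0:ℝ)) := by
      have : ContinuousOn ((fun p : ℝ × X => S.f p.1 p.2) ∘ fun s : ℝ => (s, x))
          (Ici (0:ℝ)) :=
        S.cont.comp ((continuous_id.prodMk continuous_const).continuousOn)
          (fun s hs => hs)
      exact this
    set g : ℝ → ℝ := fun s => infDist (S.f s x) P with hgdef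
    have hgcont : ContinuousOn g (Ici (0:ℝ)) :=
      (continuous_infDist_pt P).comp_continuousOn hcontx
    -- stability keeps trajectory near W after t0
    have hnearW : ∀ s : ℝ, t0 ≤ s → infDist (S.f s x) W < ε := by
      intro s hs
      have hPsubW : P ⊆ W := hPQ ▸ Set.subset_union_left
      have h1 : infDist (S.f t0 x) W < δ₀ :=
        lt_of_le_of_lt (infDist_le_infDist_of_subset hPsubW hPne)
          (lt_of_lt_of_le hstart hδle)
      have h2 := hδ₀ (S.f t0 x) h1 (s - t0) (by linarith)
      rwa [S.semigroup (s - t0) t0 (by linarith) ht0, sub_add_cancel] at h2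
    -- g never equals ε on [t0, ∞)
    have hne : ∀ s : ℝ, t0 ≤ s → g s ≠ ε := by
      intro s hs hgs
      obtain ⟨w, hwW, hwd⟩ := (infDist_lt_iff hWne).mp (hnearW s hs)
      rcases (hPQ ▸ hwW : w ∈ P ∪ Q) with hwP | hwQ
      · have : g s < ε := lt_of_le_of_lt (infDist_le_dist_of_mem hwP) hwd
        linarith
      · have hlt : g s < 2 * ε := by rw [hgs]; linarith
        obtain ⟨p, hp, hdp⟩ := (infDist_lt_iff hPne).mp hlt
        have hc := hd p hp w hwQ
        have htri := dist_triangle p (S.f s x) w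
        rw [dist_comm p (S.f s x)] at htri
        have hε3 : ε = c / 3 := hεdef
        linarith
    by_contra hcon
    push_neg at hcon
    have hgt0 : g t0 < ε := lt_of_lt_of_le hstart hδleε
    have hIcc : Set.Icc (g t0) (g t) ⊆ g '' Set.Icc t0 t :=
      intermediate_value_Icc ht (hgcont.mono fun s hs => le_trans ht0 hs.1)
    obtain ⟨s, hsmem, hgs⟩ := hIcc ⟨le_of_lt hgt0, hcon⟩
    exact hne s hsmem.1 hgs
  -- the two open sets
  set XA : Set X := {x | ∃ t : ℝ, 0 ≤ t ∧ infDist (S.f t x) A < δ} with hXAdef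
  set XB : Set X := {x | ∃ t : ℝ, 0 ≤ t ∧ infDist (S.f t x) B < δ} with hXBdef
  have hcontfx : ∀ t : ℝ, 0 ≤ t → Continuous fun x : X => S.f t x := by
    intro t ht
    exact S.cont.comp_continuous (continuous_const.prodMk continuous_id)
      (fun x => ht)
  have hopen : ∀ P : Set X,
      IsOpen {x | ∃ t : ℝ, 0 ≤ t ∧ infDist (S.f t x) P < δ} := by
    intro P
    have : {x | ∃ t : ℝ, 0 ≤ t ∧ infDist (S.f t x) P < δ}
        = ⋃ t ∈ Ici (0:ℝ), (fun x => infDist (S.f t x) P) ⁻¹' Iio δ := by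
      ext x; simp [mem_iUnion]
    rw [this]
    exact isOpen_biUnion fun t ht =>
      isOpen_Iio.preimage ((continuous_infDist_pt P).comp (hcontfx t ht))
  have hXAopen : IsOpen XA := hopen A
  have hXBopen : IsOpen XB := hopen B
  have hdAB : ∀ p ∈ A, ∀ q ∈ B, c ≤ dist p q := hdistAB
  have hdBA : ∀ p ∈ B, ∀ q ∈ A, c ≤ dist p q := fun p hp q hq =>
    dist_comm q p ▸ hdistAB q hq p hp
  have hXdisj : ∀ x, x ∈ XA → x ∈ XB → False := by
    rintro x ⟨t1, ht1, h1⟩ ⟨t2, ht2, h2⟩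
    have main : ∀ s : ℝ, 0 ≤ s → infDist (S.f s x) A < ε →
        infDist (S.f s x) B < ε → False := by
      intro s hs hA' hB'
      obtain ⟨a, haA, hda⟩ := (infDist_lt_iff hAne).mp hA'
      obtain ⟨b, hbB, hdb⟩ := (infDist_lt_iff hBne).mp hB'
      have := hdistAB a haA b hbB
      have htri := dist_triangle a (S.f s x) b
      rw [dist_comm a (S.f s x)] at htri
      have : c ≤ 2 * ε := by linarith
      linarith
    rcases le_total t1 t2 with hle | hle
    · exact main t2 ht2 (key A B hAB hAne hdAB x t1 ht1 h1 t2 hle)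
        (lt_of_lt_of_le h2 hδleε)
    · exact main t1 ht1 (lt_of_lt_of_le h1 hδleε)
        (key B A (by rw [Set.union_comm]; exact hAB) hBne hdBA x t2 ht2 h2 t1 hle)
  have hXcov : ∀ x : X, x ∈ XA ∪ XB := by
    intro x
    obtain ⟨y, -, φ, hφ, hconv⟩ :=
      isCompact_univ.tendsto_subseq (fun n : ℕ => Set.mem_univ (S.f (n:ℝ) x))
    have hyω : y ∈ S.omega x := by
      refine ⟨fun n => ((φ n : ℕ) : ℝ), fun n => Nat.cast_nonneg _, ?_, hconv⟩
      exact tendsto_natCast_atTop_atTop.comp hφ.tendsto_atTop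
    have hyW : y ∈ W := subset_closure (Set.mem_iUnion.mpr ⟨x, hyω⟩)
    obtain ⟨N, hN⟩ := (Metric.tendsto_atTop.mp hconv) δ hδpos
    have hclose : dist (S.f ((φ N : ℕ) : ℝ) x) y < δ := hN N le_rfl
    rcases (hAB ▸ hyW : y ∈ A ∪ B) with hyA | hyB
    · exact Or.inl ⟨((φ N : ℕ) : ℝ), Nat.cast_nonneg _,
        lt_of_le_of_lt (infDist_le_dist_of_mem hyA) hclose⟩
    · exact Or.inr ⟨((φ N : ℕ) : ℝ), Nat.cast_nonneg _,
        lt_of_le_of_lt (infDist_le_dist_of_mem hyB) hclose⟩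
  have hXAne : XA.Nonempty := by
    obtain ⟨a, ha⟩ := hAne
    exact ⟨a, 0, le_rfl, by rw [S.map_zero]; simpa [infDist_zero_of_mem ha] using hδpos⟩
  have hXBne : XB.Nonempty := by
    obtain ⟨b, hb⟩ := hBne
    exact ⟨b, 0, le_rfl, by rw [S.map_zero]; simpa [infDist_zero_of_mem hb] using hδpos⟩
  obtain ⟨x, -, hxA, hxB⟩ := isPreconnected_univ XA XB hXAopen hXBopen
    (fun x _ => hXcov x) ⟨hXAne.choose, Set.mem_univ _, hXAne.choose_spec⟩
    ⟨hXBne.choose, Set.mem_univ _, hXBne.choose_spec⟩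
  exact hXdisj x hxA hxB
end
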